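/- arXiv:1907.12277 — 7 statements merged into one kernel-verified Lean document; each statement's English description precedes it below -/
import Mathlib

section
/- Let ψ : A(G) → ℂ be a state satisfying: (i) ψ(u,v) = ψ(v,u) for every arc (u,v) ∈ A(G); (ii) for every unmarked vertex u ∉ M the value ψ(u,v) is the same for all neighbors v of u; and (iii) for every marked vertex u ∈ M one has Σ_{v adjacent to u} ψ(u,v) = 0. Then Uψ = ψ, i.e., ψ is fixed by the walk operator. -/
open Finset

/-- The arc set `A(G) = {(u,v) : {u,v} ∈ E}` of a simple graph. -/
abbrev Arc {V : Type*} (G : SimpleGraph V) : Type _ := {p : V × V // G.Adj p.1 p.2}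

/-- The coin operator: Grover diffusion at unmarked vertices,
negated Grover diffusion at marked vertices. -/
noncomputable def coinOp {V : Type*} [Fintype V] [DecidableEq V] (G : SimpleGraph V)
    [DecidableRel G.Adj] (M : Set V) [DecidablePred (· ∈ M)] (ψ : Arc G → ℂ) : Arc G → ℂ :=
  fun a =>
    (if a.1.1 ∈ M then (-1 : ℂ) else 1) *
      ((2 / (G.degree a.1.1 : ℂ)) *
        (∑ w ∈ (G.neighborFinset a.1.1).attach,
          ψ ⟨(a.1.1, w.1), (G.mem_neighborFinset _ _).mp w.2⟩) - ψ a)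

/-- The flip-flop shift operator. -/
def shiftOp {V : Type*} (G : SimpleGraph V) (ψ : Arc G → ℂ) : Arc G → ℂ :=
  fun a => ψ ⟨(a.1.2, a.1.1), a.2.symm⟩

/-- The walk operator `U = S ∘ C`. -/
noncomputable def walkOp {V : Type*} [Fintype V] [DecidableEq V] (G : SimpleGraph V)
    [DecidableRel G.Adj] (M : Set V) [DecidablePred (· ∈ M)] (ψ : Arc G → ℂ) : Arc G → ℂ :=
  shiftOp G (coinOp G M ψ)

theorem stmt0 {V : Type*} [Fintype V] [DecidableEq V] (G : SimpleGraph V) [DecidableRel G.Adj]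
    (hdeg : ∀ v : V, 0 < G.degree v)
    (M : Set V) [DecidablePred (· ∈ M)] (ψ : Arc G → ℂ)
    (hsym : ∀ a : Arc G, ψ a = ψ ⟨(a.1.2, a.1.1), a.2.symm⟩)
    (hunmarked : ∀ u : V, u ∉ M → ∀ v w : V, (hv : G.Adj u v) → (hw : G.Adj u w) →
      ψ ⟨(u, v), hv⟩ = ψ ⟨(u, w), hw⟩)
    (hmarked : ∀ u : V, u ∈ M →
      ∑ w ∈ (G.neighborFinset u).attach,
        ψ ⟨(u, w.1), (G.mem_neighborFinset _ _).mp w.2⟩ = 0) :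
    walkOp G M ψ = ψ := by
  funext a
  obtain ⟨⟨u, v⟩, huv⟩ := a
  show coinOp G M ψ ⟨(v, u), huv.symm⟩ = ψ ⟨(u, v), huv⟩
  unfold coinOp
  simp only
  by_cases hv : v ∈ M
  · rw [if_pos hv, hmarked v hv]
    have := hsym ⟨(u, v), huv⟩
    simp at this ⊢
    exact this.symm
  · rw [if_neg hv]
    have hsum : (∑ w ∈ (G.neighborFinset v).attach,
        ψ ⟨(v, w.1), (G.mem_neighborFinset _ _).mp w.2⟩)
        = (G.degree v : ℂ) * ψ ⟨(v, u), huv.symm⟩ := by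
      rw [Finset.sum_congr rfl (fun w _ =>
        hunmarked v hv w.1 u ((G.mem_neighborFinset _ _).mp w.2) huv.symm)]
      rw [Finset.sum_const, Finset.card_attach, nsmul_eq_mul]
      rfl
    rw [hsum]
    have hd : (G.degree v : ℂ) ≠ 0 := by
      exact_mod_cast (hdeg v).ne'
    field_simp
    have := hsym ⟨(u, v), huv⟩
    simp at this
    rw [← this]
    ring
end

section
/- Suppose G is connected, M is nonempty, the subgraph of G induced on M is connected, and the subgraph of G induced on V \ M is nonempty and disconnected (it has at least two connected components). Then the coined quantum walk on G with marked set M has a stationary state, i.e., there exists a nonzero ψ : A(G) → ℂ with Uψ = ψ. -/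
open Finset

open SimpleGraph in
lemma aux_card_le_edges {W : Type*} [Fintype W] [DecidableEq W] (H : SimpleGraph W)
    [Fintype H.edgeSet] (hc : H.Connected) :
    Fintype.card W ≤ H.edgeFinset.card + 1 := by
  classical
  obtain ⟨r⟩ := hc.nonempty
  have key : ∀ v : W, v ≠ r → ∃ w, H.Adj v w ∧ H.dist w r + 1 = H.dist v r := by
    intro v hv
    have hreach : H.Reachable v r := hc.preconnected v r
    obtain ⟨p, hp⟩ := hreach.exists_walk_length_eq_dist
    have hpos : 0 < H.dist v r := hreach.pos_dist_of_ne hv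
    cases p with
    | nil => rw [← hp] at hpos; simp at hpos
    | @cons _ w _ hadj q =>
      refine ⟨w, hadj, ?_⟩
      have h1 : H.dist w r ≤ q.length := SimpleGraph.dist_le q
      have h2 : (SimpleGraph.Walk.cons hadj q).length = q.length + 1 :=
        SimpleGraph.Walk.length_cons _ _
      have h3 : H.dist v r ≤ H.dist v w + H.dist w r := hc.dist_triangle
      have h4 : H.dist v w ≤ 1 := by
        simpa using SimpleGraph.dist_le (SimpleGraph.Walk.cons hadj SimpleGraph.Walk.nil)
      omega
  choose nxt hadj hdist using key
  set f : {v : W // v ≠ r} → {e // e ∈ H.edgeFinset} :=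
    fun v => ⟨s(v.1, nxt v.1 v.2), by
      rw [SimpleGraph.mem_edgeFinset, SimpleGraph.mem_edgeSet]; exact hadj v.1 v.2⟩ with hf
  have hinj : Function.Injective f := by
    rintro ⟨v₁, h₁⟩ ⟨v₂, h₂⟩ hfe
    simp only [hf, Subtype.mk.injEq, Sym2.eq_iff] at hfe
    rcases hfe with ⟨h, _⟩ | ⟨ha, hb⟩
    · exact Subtype.ext h
    · exfalso
      have d1 := hdist v₁ h₁
      have d2 := hdist v₂ h₂
      rw [← ha] at d2
      rw [hb] at d1
      omega
  have hcard := Fintype.card_le_of_injective f hinj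
  rw [Fintype.card_coe] at hcard
  have h1 : Fintype.card {v : W // v ≠ r} = Fintype.card W - 1 := by
    simp [Fintype.card_subtype_compl]
  have h2 : 1 ≤ Fintype.card W := Fintype.card_pos_iff.mpr ⟨r⟩
  omega

theorem stmt1 {V : Type*} [Fintype V] [DecidableEq V] (G : SimpleGraph V) [DecidableRel G.Adj]
    (hdeg : ∀ v : V, 0 < G.degree v)
    (M : Set V) [DecidablePred (· ∈ M)]
    (hG : G.Connected) (hM : M.Nonempty)
    (hMconn : (G.induce M).Connected)
    (hcompl : Mᶜ.Nonempty)
    (hdisc : ¬ (G.induce Mᶜ).Preconnected) :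
    ∃ ψ : Arc G → ℂ, ψ ≠ 0 ∧ walkOp G M ψ = ψ := by
  classical
  -- two unreachable vertices in the complement
  rw [SimpleGraph.Preconnected] at hdisc
  push_neg at hdisc
  obtain ⟨u₀, v₀, hnr⟩ := hdisc
  -- the "A side" of the complement
  set A : Set V := {x | ∃ hx : x ∈ Mᶜ, (G.induce Mᶜ).Reachable u₀ ⟨x, hx⟩} with hA
  have hu₀A : (u₀ : V) ∈ A := ⟨u₀.2, by exact SimpleGraph.Reachable.refl _⟩
  have hv₀A : (v₀ : V) ∉ A := by
    rintro ⟨hx, hr⟩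
    exact hnr hr
  have hAdjA : ∀ x y : V, x ∉ M → y ∉ M → G.Adj x y → (x ∈ A ↔ y ∈ A) := by
    intro x y hx hy hxy
    have hadj : (G.induce Mᶜ).Adj ⟨x, hx⟩ ⟨y, hy⟩ := hxy
    constructor
    · rintro ⟨hx', hr⟩
      exact ⟨hy, hr.trans hadj.reachable⟩
    · rintro ⟨hy', hr⟩
      exact ⟨hx, hr.trans hadj.symm.reachable⟩
  -- the induced graph on M and its edges
  set H : SimpleGraph ↥M := G.induce M with hH
  haveI : Fintype H.edgeSet := Fintype.ofFinite _
  set EF : Finset (Sym2 ↥M) := H.edgeFinset with hEF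
  have hMcard : Fintype.card ↥M ≤ EF.card + 1 := aux_card_le_edges H hMconn
  -- the linear dependence
  set ι := Bool ⊕ {e // e ∈ EF} with hι
  set coeff : ι → ↥M → V → ℂ := fun i v u =>
    match i with
    | .inl b => if u ∈ M then 0 else
        (if u ∈ A then (if b then 1 else 0) else (if b then 0 else 1))
    | .inr e => if hu : u ∈ M then (if s(v, (⟨u, hu⟩ : ↥M)) = e.1 then 1 else 0) else 0
    with hcoeff
  set g : ι → (↥M → ℂ) := fun i v => ∑ u ∈ G.neighborFinset v.1, coeff i v u with hg
  have hnli : ¬ LinearIndependent ℂ g := by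
    intro h
    have hle := h.fintype_card_le_finrank
    rw [Module.finrank_pi] at hle
    simp only [hι, Fintype.card_sum, Fintype.card_bool, Fintype.card_coe] at hle
    omega
  obtain ⟨c, hc0, i₀, hi₀⟩ := Fintype.not_linearIndependent_iff.mp hnli
  -- build the edge weights
  set cwt : V → ℂ := fun x => if x ∈ A then c (.inl true) else c (.inl false) with hcwt
  set Wt : V → V → ℂ := fun x y =>
    if hy : y ∈ M then
      (if hx : x ∈ M then
        (if h : s((⟨x, hx⟩ : ↥M), (⟨y, hy⟩ : ↥M)) ∈ EF then c (.inr ⟨_, h⟩) else 0)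
      else cwt x)
    else cwt y
    with hWt
  -- the pointwise expansion at marked vertices
  have hW : ∀ (v : ↥M) (u : V), u ∈ G.neighborFinset v.1 →
      Wt v.1 u = ∑ i : ι, c i * coeff i v u := by
    intro v u hu
    rw [Fintype.sum_sum_type]
    by_cases hum : u ∈ M
    · have hadj : H.Adj v ⟨u, hum⟩ := (G.mem_neighborFinset _ _).mp hu
      have hE0 : s(v, (⟨u, hum⟩ : ↥M)) ∈ EF := by
        rw [hEF, SimpleGraph.mem_edgeFinset, SimpleGraph.mem_edgeSet]; exact hadj
      have hL : Wt v.1 u = c (.inr ⟨s(v, (⟨u, hum⟩ : ↥M)), hE0⟩) := by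
        simp only [hWt]
        rw [dif_pos hum, dif_pos v.2, dif_pos]
      rw [hL]
      have hb : ∀ b : Bool, c (.inl b) * coeff (.inl b) v u = 0 := by
        intro b; simp [hcoeff, hum]
      have hsum2 : ∑ e : {e // e ∈ EF}, c (.inr e) * coeff (.inr e) v u
          = c (.inr ⟨s(v, (⟨u, hum⟩ : ↥M)), hE0⟩) := by
        rw [Finset.sum_eq_single (⟨s(v, (⟨u, hum⟩ : ↥M)), hE0⟩ : {e // e ∈ EF})]
        · simp [hcoeff, hum]
        · intro e _ hne
          have : ¬ (s(v, (⟨u, hum⟩ : ↥M)) = e.1) := by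
            intro h; exact hne (Subtype.ext h.symm)
          simp [hcoeff, hum, this]
        · intro h; exact absurd (Finset.mem_univ _) h
      rw [Fintype.sum_bool, hb true, hb false, hsum2]
      ring
    · have hL : Wt v.1 u = cwt u := by simp only [hWt]; rw [dif_neg hum]
      have hsum2 : ∑ e : {e // e ∈ EF}, c (.inr e) * coeff (.inr e) v u = 0 := by
        apply Finset.sum_eq_zero; intro e _; simp [hcoeff, hum]
      rw [hL, hsum2, Fintype.sum_bool]
      by_cases huA : u ∈ A <;> simp [hcoeff, hcwt, hum, huA]
  -- vertex sums vanish at marked vertices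
  have hS : ∀ v : ↥M, ∑ u ∈ G.neighborFinset v.1, Wt v.1 u = 0 := by
    intro v
    have h1 : ∑ u ∈ G.neighborFinset v.1, Wt v.1 u
        = ∑ u ∈ G.neighborFinset v.1, ∑ i : ι, c i * coeff i v u :=
      Finset.sum_congr rfl fun u hu => hW v u hu
    have h2 := congrFun hc0 v
    simp only [Finset.sum_apply, Pi.smul_apply, smul_eq_mul, Pi.zero_apply] at h2
    rw [h1, Finset.sum_comm]
    calc ∑ i : ι, ∑ u ∈ G.neighborFinset v.1, c i * coeff i v u
        = ∑ i : ι, c i * g i v := by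
          apply Finset.sum_congr rfl; intro i _; rw [hg, Finset.mul_sum]
      _ = 0 := h2
  -- symmetry of the weights on edges
  have hWsymm : ∀ x y : V, G.Adj x y → Wt x y = Wt y x := by
    intro x y hxy
    by_cases hx : x ∈ M <;> by_cases hy : y ∈ M
    · simp only [hWt]
      rw [dif_pos hy, dif_pos hx, dif_pos hx, dif_pos hy]
      rw [Sym2.eq_swap]
    · simp only [hWt]; rw [dif_neg hy, dif_pos hx, dif_neg hy]
    · simp only [hWt]; rw [dif_pos hy, dif_neg hx, dif_neg hx]
    · simp only [hWt]; rw [dif_neg hy, dif_neg hx]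
      have := hAdjA x y hx hy hxy
      by_cases hxA : x ∈ A
      · rw [hcwt]; simp [hxA, this.mp hxA]
      · have : y ∉ A := fun h => hxA (this.mpr h)
        rw [hcwt]; simp [hxA, this]
  -- weights at an unmarked vertex are constant
  have hWconst : ∀ x y : V, x ∉ M → G.Adj x y → Wt x y = cwt x := by
    intro x y hx hxy
    by_cases hy : y ∈ M
    · simp only [hWt]; rw [dif_pos hy, dif_neg hx]
    · simp only [hWt]; rw [dif_neg hy]
      have := hAdjA x y hx hy hxy
      by_cases hxA : x ∈ A
      · rw [hcwt]; simp [hxA, this.mp hxA]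
      · have hyA : y ∉ A := fun h => hxA (this.mpr h)
        rw [hcwt]; simp [hxA, hyA]
  -- the stationary state
  refine ⟨fun a => Wt a.1.1 a.1.2, ?_, ?_⟩
  · -- nonzero
    intro h0
    have hzero : ∀ a : Arc G, Wt a.1.1 a.1.2 = 0 := fun a => congrFun h0 a
    have hnbr : ∀ x : V, ∃ n, G.Adj x n := by
      intro x
      have hne : (G.neighborFinset x).Nonempty := by
        rw [← Finset.card_pos, SimpleGraph.card_neighborFinset_eq_degree]; exact hdeg x
      obtain ⟨n, hn⟩ := hne
      exact ⟨n, (G.mem_neighborFinset _ _).mp hn⟩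
    apply hi₀
    clear hi₀
    rcases i₀ with (b | e)
    · obtain ⟨n, hadj⟩ := hnbr (if b then u₀.1 else v₀.1)
      have hxm : (if b then u₀.1 else v₀.1) ∉ M := by
        cases b <;> simp [u₀.2, v₀.2] <;> [exact v₀.2; exact u₀.2]
      have := hzero ⟨((if b then u₀.1 else v₀.1), n), hadj⟩
      rw [hWconst _ n hxm hadj] at this
      rw [hcwt] at this
      cases b
      · simpa [hv₀A] using this
      · simpa [hu₀A] using this
    · obtain ⟨ee, he⟩ := e
      revert he
      refine Sym2.inductionOn ee ?_
      intro a b he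
      have hadj' : H.Adj a b := by
        rw [← SimpleGraph.mem_edgeSet, ← SimpleGraph.mem_edgeFinset]; exact he
      have hadj : G.Adj a.1 b.1 := hadj'
      have h2 := hzero ⟨(a.1, b.1), hadj⟩
      rw [← h2]
      simp only [hWt]
      rw [dif_pos b.2, dif_pos a.2, dif_pos he]
  · -- stationary
    funext a
    obtain ⟨⟨u, v⟩, hadj⟩ := a
    show coinOp G M (fun a => Wt a.1.1 a.1.2) ⟨(v, u), hadj.symm⟩ = Wt u v
    have hattach : ∑ w ∈ (G.neighborFinset v).attach,
        Wt v w.1 = ∑ w ∈ G.neighborFinset v, Wt v w := Finset.sum_attach _ _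
    by_cases hv : v ∈ M
    · have hsum : ∑ w ∈ G.neighborFinset v, Wt v w = 0 := hS ⟨v, hv⟩
      simp only [coinOp]
      rw [if_pos hv]
      rw [hattach, hsum]
      rw [hWsymm u v hadj]
      ring
    · -- unmarked head
      have hsum : ∑ w ∈ G.neighborFinset v, Wt v w = (G.degree v : ℂ) * cwt v := by
        rw [Finset.sum_congr rfl (fun w hw => hWconst v w hv ((G.mem_neighborFinset _ _).mp hw))]
        rw [Finset.sum_const, SimpleGraph.card_neighborFinset_eq_degree, nsmul_eq_mul]
      have hdv : (G.degree v : ℂ) ≠ 0 := Nat.cast_ne_zero.mpr (hdeg v).ne'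
      simp only [coinOp]
      rw [if_neg hv, hattach, hsum]
      have hWvu : Wt v u = cwt v := hWconst v u hv hadj.symm
      have hWuv : Wt u v = cwt v := by rw [hWsymm u v hadj]; exact hWvu
      rw [hWvu, hWuv]
      field_simp
      ring
end

section
/- Let H = (V, E) be a finite connected simple graph that is bipartite with partite sets A and B (every edge joins a vertex of A to a vertex of B), and let s : V → ℝ. Then there exists an edge-weight function w : E → ℝ such that for every vertex v ∈ V the sum of w over the edges incident to v equals s(v), if and only if Σ_{v ∈ A} s(v) = Σ_{v ∈ B} s(v). -/
open Finset

/-- The vertex sum of an edge-weight function `w : E → ℝ` at a vertex `v`: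
the sum of `w` over the edges incident to `v`. -/
noncomputable def vertexSum {V : Type*} [Fintype V] [DecidableEq V] (H : SimpleGraph V)
    [DecidableRel H.Adj] (w : H.edgeSet → ℝ) (v : V) : ℝ :=
  ∑ e ∈ (H.incidenceFinset v).attach,
    w ⟨e.1, H.incidenceSet_subset v ((H.mem_incidenceFinset v e.1).mp e.2)⟩

section Aux

set_option linter.unusedSectionVars false

variable {V : Type*} [Fintype V] [DecidableEq V] (H : SimpleGraph V) [DecidableRel H.Adj]

lemma vertexSum_eq (w : H.edgeSet → ℝ) (v : V) :
    vertexSum H w v = ∑ e : H.edgeSet, if v ∈ (e : Sym2 V) then w e else 0 := by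
  rw [vertexSum, ← Finset.sum_filter]
  apply Finset.sum_bij (fun e _ => (⟨e.1, H.incidenceSet_subset v ((H.mem_incidenceFinset v e.1).mp e.2)⟩ : H.edgeSet))
  · intro a _
    simp only [Finset.mem_filter, Finset.mem_univ, true_and]
    exact ((H.mem_incidenceFinset v a.1).mp a.2).2
  · intro a _ b _ hab
    exact Subtype.ext (Subtype.mk_eq_mk.mp hab)
  · intro b hb
    simp only [Finset.mem_filter, Finset.mem_univ, true_and] at hb
    refine ⟨⟨b.1, (H.mem_incidenceFinset v b.1).mpr ⟨b.2, hb⟩⟩, Finset.mem_attach _ _, rfl⟩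
  · intro a _
    rfl

lemma vertexSum_zero (v : V) : vertexSum H 0 v = 0 := by
  simp [vertexSum]

lemma vertexSum_sub (w₁ w₂ : H.edgeSet → ℝ) (v : V) :
    vertexSum H (w₁ - w₂) v = vertexSum H w₁ v - vertexSum H w₂ v := by
  simp [vertexSum, Finset.sum_sub_distrib]

lemma vertexSum_sum {ι : Type*} (t : Finset ι) (f : ι → H.edgeSet → ℝ) (v : V) :
    vertexSum H (fun e => ∑ i ∈ t, f i e) v = ∑ i ∈ t, vertexSum H (f i) v := by
  simp [vertexSum]
  exact Finset.sum_comm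

lemma vertexSum_smul (c : ℝ) (w : H.edgeSet → ℝ) (v : V) :
    vertexSum H (fun e => c * w e) v = c * vertexSum H w v := by
  simp [vertexSum, Finset.mul_sum]

lemma vertexSum_delta {a b : V} (h : H.Adj a b) (v : V) :
    vertexSum H (fun (e : H.edgeSet) => if e.1 = s(a, b) then 1 else 0) v
      = (if v = a then 1 else 0) + (if v = b then 1 else 0) := by
  rw [vertexSum_eq]
  have hE : s(a, b) ∈ H.edgeSet := H.mem_edgeSet.mpr h
  calc ∑ e : H.edgeSet, (if v ∈ (e : Sym2 V) then (if e.1 = s(a,b) then (1:ℝ) else 0) else 0)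
      = ∑ e : H.edgeSet, (if e = (⟨s(a,b), hE⟩ : H.edgeSet) then (if v ∈ (s(a,b) : Sym2 V) then (1:ℝ) else 0) else 0) := by
        apply Finset.sum_congr rfl
        intro e _
        by_cases he : e = (⟨s(a,b), hE⟩ : H.edgeSet)
        · subst he; simp
        · have h1 : e.1 ≠ s(a,b) := fun hh => he (Subtype.ext hh)
          simp [h1, he]
    _ = (if v ∈ (s(a,b) : Sym2 V) then (1:ℝ) else 0) := by
        rw [Finset.sum_ite_eq' Finset.univ]
        simp
    _ = (if v = a then 1 else 0) + (if v = b then 1 else 0) := by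
        simp only [Sym2.mem_iff]
        have hne := h.ne
        split_ifs with h1 h2 h3 <;> simp_all

/-- Alternating edge weights along a walk. -/
noncomputable def wfW {V : Type*} [DecidableEq V] (H : SimpleGraph V) :
    {x y : V} → H.Walk x y → (H.edgeSet → ℝ)
  | _, _, SimpleGraph.Walk.nil => 0
  | x, _, SimpleGraph.Walk.cons (v := a) _ p =>
      (fun (e : H.edgeSet) => if e.1 = s(x, a) then 1 else 0) - wfW H p

lemma vertexSum_wfW {x y : V} (p : H.Walk x y) (v : V) :
    vertexSum H (wfW H p) v
      = (if v = x then 1 else 0) + (-1) ^ (p.length + 1) * (if v = y then 1 else 0) := by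
  induction p with
  | nil =>
      show vertexSum H 0 v = _
      rw [vertexSum_zero]
      simp only [SimpleGraph.Walk.length_nil]
      split_ifs <;> ring
  | @cons x a y h q ih =>
      show vertexSum H ((fun (e : H.edgeSet) => if e.1 = s(x, a) then 1 else 0) - wfW H q) v = _
      rw [vertexSum_sub, vertexSum_delta H h, ih, SimpleGraph.Walk.length_cons]
      rw [show q.length + 1 + 1 = (q.length + 1) + 1 from rfl, pow_succ]
      ring

lemma walk_sign (A B : Finset V) (hdisj : Disjoint A B)
    (hbip : ∀ u v : V, H.Adj u v → (u ∈ A ∧ v ∈ B) ∨ (u ∈ B ∧ v ∈ A))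
    {x y : V} (p : H.Walk x y) :
    ((-1 : ℝ)) ^ p.length = (if x ∈ A then (1:ℝ) else -1) * (if y ∈ A then 1 else -1) := by
  induction p with
  | nil => split_ifs <;> norm_num
  | @cons x a y h q ih =>
      have hx : (if x ∈ A then (1:ℝ) else -1) = -(if a ∈ A then 1 else -1) := by
        rcases hbip x a h with ⟨h1, h2⟩ | ⟨h1, h2⟩
        · rw [if_pos h1, if_neg (Finset.disjoint_right.mp hdisj h2)]; ring
        · rw [if_neg (Finset.disjoint_left.mp hdisj · h1), if_pos h2]
      rw [SimpleGraph.Walk.length_cons, pow_succ, ih]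
      rw [hx]
      ring

lemma sigma_split (A B : Finset V) (hpart : A ∪ B = Finset.univ) (hdisj : Disjoint A B)
    (s : V → ℝ) :
    ∑ v : V, (if v ∈ A then (1:ℝ) else -1) * s v = (∑ v ∈ A, s v) - ∑ v ∈ B, s v := by
  rw [← hpart, Finset.sum_union hdisj]
  have h1 : ∑ v ∈ A, (if v ∈ A then (1:ℝ) else -1) * s v = ∑ v ∈ A, s v :=
    Finset.sum_congr rfl fun v hv => by rw [if_pos hv, one_mul]
  have h2 : ∑ v ∈ B, (if v ∈ A then (1:ℝ) else -1) * s v = ∑ v ∈ B, -(s v) :=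
    Finset.sum_congr rfl fun v hv => by
      rw [if_neg (Finset.disjoint_right.mp hdisj hv)]; ring
  rw [h1, h2, Finset.sum_neg_distrib]
  ring

end Aux

theorem stmt2 {V : Type*} [Fintype V] [DecidableEq V] (H : SimpleGraph V) [DecidableRel H.Adj]
    (hconn : H.Connected)
    (A B : Finset V) (hpart : A ∪ B = Finset.univ) (hdisj : Disjoint A B)
    (hbip : ∀ u v : V, H.Adj u v → (u ∈ A ∧ v ∈ B) ∨ (u ∈ B ∧ v ∈ A))
    (s : V → ℝ) :
    (∃ w : H.edgeSet → ℝ, ∀ v : V, vertexSum H w v = s v) ↔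
      ∑ v ∈ A, s v = ∑ v ∈ B, s v := by
  constructor
  · rintro ⟨w, hw⟩
    have key : ∑ v : V, (if v ∈ A then (1:ℝ) else -1) * s v = 0 := by
      calc ∑ v : V, (if v ∈ A then (1:ℝ) else -1) * s v
          = ∑ v : V, ∑ e : H.edgeSet,
              (if v ∈ A then (1:ℝ) else -1) * (if v ∈ (e : Sym2 V) then w e else 0) := by
            refine Finset.sum_congr rfl fun v _ => ?_
            rw [← hw v, vertexSum_eq, Finset.mul_sum]
        _ = ∑ e : H.edgeSet, ∑ v : V,
              (if v ∈ A then (1:ℝ) else -1) * (if v ∈ (e : Sym2 V) then w e else 0) :=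
            Finset.sum_comm
        _ = 0 := by
            apply Finset.sum_eq_zero
            intro e _
            obtain ⟨⟨a, b⟩, hab⟩ := e.1.exists_rep
            have hab' : s(a, b) = (e : Sym2 V) := hab
            have hE : s(a, b) ∈ H.edgeSet := by rw [hab']; exact e.2
            have hadj : H.Adj a b := H.mem_edgeSet.mp hE
            have hne := hadj.ne
            have hmem : ∀ v : V, v ∈ (e : Sym2 V) ↔ (v = a ∨ v = b) := fun v => by
              rw [← hab', Sym2.mem_iff]
            have step : ∀ v : V,
                (if v ∈ A then (1:ℝ) else -1) * (if v ∈ (e : Sym2 V) then w e else 0)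
                  = (if v = a then (if v ∈ A then (1:ℝ) else -1) * w e else 0)
                    + (if v = b then (if v ∈ A then (1:ℝ) else -1) * w e else 0) := by
              intro v
              by_cases h1 : v = a <;> by_cases h2 : v = b
              · exact absurd (h1 ▸ h2) hne
              all_goals simp [hmem, h1, h2, hne, Ne.symm hne]
            rw [Finset.sum_congr rfl fun v _ => step v, Finset.sum_add_distrib,
              Finset.sum_ite_eq' Finset.univ a, Finset.sum_ite_eq' Finset.univ b]
            simp only [Finset.mem_univ, if_true]
            rcases hbip a b hadj with ⟨h1, h2⟩ | ⟨h1, h2⟩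
            · rw [if_pos h1, if_neg (Finset.disjoint_right.mp hdisj h2)]; ring
            · rw [if_neg (Finset.disjoint_left.mp hdisj · h1), if_pos h2]; ring
    rw [sigma_split A B hpart hdisj s] at key
    linarith
  · intro hsum
    obtain ⟨r⟩ := hconn.nonempty
    have p : ∀ v : V, H.Walk r v := fun v => (hconn.preconnected r v).some
    refine ⟨fun e => ∑ v : V,
      (s v * (-((if r ∈ A then (1:ℝ) else -1) * (if v ∈ A then 1 else -1)))) * wfW H (p v) e,
      ?_⟩
    intro u
    rw [vertexSum_sum]
    have hterm : ∀ v : V,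
        vertexSum H (fun e =>
          (s v * (-((if r ∈ A then (1:ℝ) else -1) * (if v ∈ A then 1 else -1)))) * wfW H (p v) e) u
        = (s v * (-((if r ∈ A then (1:ℝ) else -1) * (if v ∈ A then 1 else -1)))) *
            ((if u = r then 1 else 0)
              + (-((if r ∈ A then (1:ℝ) else -1) * (if v ∈ A then 1 else -1))) * (if u = v then 1 else 0)) := by
      intro v
      rw [vertexSum_smul, vertexSum_wfW]
      have hs : ((-1 : ℝ)) ^ ((p v).length + 1)
          = -((if r ∈ A then (1:ℝ) else -1) * (if v ∈ A then 1 else -1)) := by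
        rw [pow_succ, walk_sign H A B hdisj hbip (p v)]
        ring
      rw [hs]
    rw [Finset.sum_congr rfl fun v _ => hterm v]
    have hsq : ∀ t : V, (if t ∈ A then (1:ℝ) else -1) * (if t ∈ A then (1:ℝ) else -1) = 1 := by
      intro t; split_ifs <;> norm_num
    have expand : ∀ v : V,
        (s v * (-((if r ∈ A then (1:ℝ) else -1) * (if v ∈ A then 1 else -1)))) *
            ((if u = r then 1 else 0)
              + (-((if r ∈ A then (1:ℝ) else -1) * (if v ∈ A then 1 else -1))) * (if u = v then 1 else 0))
        = ((-(if r ∈ A then (1:ℝ) else -1)) * (if u = r then 1 else 0)) *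
            ((if v ∈ A then (1:ℝ) else -1) * s v)
          + (if u = v then s v else 0) := by
      intro v
      have h1 := hsq r
      have h2 := hsq v
      by_cases huv : u = v
      · simp only [if_pos huv]
        linear_combination (s v * ((if v ∈ A then (1:ℝ) else -1) * (if v ∈ A then (1:ℝ) else -1))) * h1 + s v * h2
      · simp only [if_neg huv]
        ring
    rw [Finset.sum_congr rfl fun v _ => expand v, Finset.sum_add_distrib, ← Finset.mul_sum,
      sigma_split A B hpart hdisj s, hsum, sub_self, mul_zero, zero_add,
      Finset.sum_ite_eq Finset.univ u]
    simp
end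

section
/- Let H = (V, E) be a finite connected simple graph that is not bipartite (it contains a cycle of odd length), and let s : V → ℝ be arbitrary. Then there exists an edge-weight function w : E → ℝ such that for every vertex v ∈ V the sum of w over the edges incident to v equals s(v). -/
open Finset

section Aux
variable {V : Type*} [Fintype V] [DecidableEq V] (H : SimpleGraph V) [DecidableRel H.Adj]

/-- A function `f : V → ℝ` is achievable if it arises as the vertex sums of some weight. -/
def Ach (f : V → ℝ) : Prop := ∃ w : H.edgeSet → ℝ, ∀ v, vertexSum H w v = f v

variable {H}

lemma ach_zero : Ach H (fun _ => 0) := by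
  refine ⟨fun _ => 0, fun v => ?_⟩
  simp [vertexSum]

lemma ach_add {f g : V → ℝ} (hf : Ach H f) (hg : Ach H g) :
    Ach H (fun v => f v + g v) := by
  obtain ⟨w1, h1⟩ := hf; obtain ⟨w2, h2⟩ := hg
  refine ⟨fun e => w1 e + w2 e, fun v => ?_⟩
  simp only [vertexSum, Finset.sum_add_distrib]
  rw [show (∑ e ∈ (H.incidenceFinset v).attach,
      w1 ⟨e.1, H.incidenceSet_subset v ((H.mem_incidenceFinset v e.1).mp e.2)⟩) = vertexSum H w1 v from rfl,
    show (∑ e ∈ (H.incidenceFinset v).attach,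
      w2 ⟨e.1, H.incidenceSet_subset v ((H.mem_incidenceFinset v e.1).mp e.2)⟩) = vertexSum H w2 v from rfl,
    h1, h2]

lemma ach_smul (c : ℝ) {f : V → ℝ} (hf : Ach H f) : Ach H (fun v => c * f v) := by
  obtain ⟨w, h⟩ := hf
  refine ⟨fun e => c * w e, fun v => ?_⟩
  simp only [vertexSum, ← Finset.mul_sum]
  rw [show (∑ e ∈ (H.incidenceFinset v).attach,
      w ⟨e.1, H.incidenceSet_subset v ((H.mem_incidenceFinset v e.1).mp e.2)⟩) = vertexSum H w v from rfl, h]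

lemma ach_sub {f g : V → ℝ} (hf : Ach H f) (hg : Ach H g) :
    Ach H (fun v => f v - g v) := by
  have := ach_add hf (ach_smul (-1) hg)
  convert this using 2 with v
  ring

lemma ach_edge {u v : V} (h : H.Adj u v) :
    Ach H (fun x => (if x = u then 1 else 0) + (if x = v then 1 else 0)) := by
  refine ⟨fun e => if e.1 = Sym2.mk u v then 1 else 0, fun x => ?_⟩
  unfold vertexSum
  rw [Finset.sum_attach (H.incidenceFinset x) (fun a => if a = Sym2.mk u v then (1:ℝ) else 0),
    Finset.sum_ite_eq' (H.incidenceFinset x) (Sym2.mk u v) (fun _ => (1:ℝ))]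
  have hne := h.ne
  by_cases h1 : x = u <;> by_cases h2 : x = v <;>
    simp [SimpleGraph.mem_incidenceFinset, SimpleGraph.mk'_mem_incidenceSet_iff, h, h1, h2] <;>
    tauto

lemma ach_walk {u v : V} (p : H.Walk u v) :
    Ach H (fun x => (if x = u then 1 else 0) - (-1)^p.length * (if x = v then 1 else 0)) := by
  induction p with
  | nil =>
    convert ach_zero (H := H) using 2 with x
    simp
  | @cons a b c hab q ih =>
    have := ach_sub (ach_edge hab) ih
    convert this using 2 with x
    simp only [SimpleGraph.Walk.length_cons]
    ring

end Aux

theorem stmt3 {V : Type*} [Fintype V] [DecidableEq V] (H : SimpleGraph V) [DecidableRel H.Adj]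
    (hconn : H.Connected)
    (hnotbip : ¬ ∃ (A B : Set V), A ∪ B = Set.univ ∧ Disjoint A B ∧
        ∀ u v : V, H.Adj u v → (u ∈ A ∧ v ∈ B) ∨ (u ∈ B ∧ v ∈ A))
    (s : V → ℝ) :
    ∃ w : H.edgeSet → ℝ, ∀ v : V, vertexSum H w v = s v := by
  -- Step 1: there is an odd closed walk.
  have hodd : ∃ (x : V) (p : H.Walk x x), Odd p.length := by
    by_contra hc
    push_neg at hc
    have heven : ∀ (x : V) (p : H.Walk x x), Even p.length := by
      intro x p
      rcases Nat.even_or_odd p.length with h | h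
      · exact h
      · exact absurd h (hc x p)
    have hne : Nonempty V := hconn.nonempty
    obtain ⟨r⟩ := hne
    refine hnotbip ⟨{v | ∃ p : H.Walk r v, Even p.length},
      {v | ∃ p : H.Walk r v, Even p.length}ᶜ, Set.union_compl_self _,
      disjoint_compl_right, fun u v huv => ?_⟩
    have hAorB : ∀ z : V, (∃ p : H.Walk r z, Even p.length) ∨ (∃ p : H.Walk r z, Odd p.length) := by
      intro z
      obtain ⟨p⟩ := hconn r z
      rcases Nat.even_or_odd p.length with h | h
      · exact Or.inl ⟨p, h⟩
      · exact Or.inr ⟨p, h⟩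
    have hnotboth : ∀ z : V, (∃ p : H.Walk r z, Even p.length) →
        (∃ p : H.Walk r z, Odd p.length) → False := by
      rintro z ⟨p, hp⟩ ⟨q, hq⟩
      have := heven r (p.append q.reverse)
      rw [SimpleGraph.Walk.length_append, SimpleGraph.Walk.length_reverse] at this
      rw [Nat.even_add] at this
      simp [hp, Nat.not_even_iff_odd.mpr hq] at this
    by_cases hu : ∃ p : H.Walk r u, Even p.length
    · obtain ⟨p, hp⟩ := hu
      left
      refine ⟨⟨p, hp⟩, ?_⟩
      intro hv
      refine hnotboth v hv ⟨p.concat huv, ?_⟩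
      rw [SimpleGraph.Walk.length_concat, Nat.odd_add_one]
      exact Nat.not_odd_iff_even.mpr hp
    · right
      obtain ⟨p, hp⟩ := (hAorB u).resolve_left hu
      refine ⟨hu, ⟨p.concat huv, ?_⟩⟩
      rw [SimpleGraph.Walk.length_concat, Nat.even_add_one, Nat.not_even_iff_odd]
      exact hp
  -- Step 2: each indicator function is achievable.
  obtain ⟨x, p, hp⟩ := hodd
  have hx : Ach H (fun y => if y = x then 1 else 0) := by
    have h2 := ach_walk p
    rw [Odd.neg_one_pow hp] at h2
    have := ach_smul (1/2 : ℝ) h2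
    convert this using 2 with y
    by_cases hy : y = x <;> simp [hy] <;> ring
  have hsingle : ∀ u : V, Ach H (fun y => if y = u then 1 else 0) := by
    intro u
    obtain ⟨q⟩ := hconn u x
    have h1 := ach_walk q
    have h2 := ach_smul ((-1)^q.length) hx
    have := ach_add h1 h2
    convert this using 2 with y
    ring
  -- Step 3: take linear combination.
  have hsum : Ach H (fun y => ∑ u : V, s u * (if y = u then 1 else 0)) := by
    classical
    have : ∀ (t : Finset V), Ach H (fun y => ∑ u ∈ t, s u * (if y = u then 1 else 0)) := by
      intro t
      induction t using Finset.induction with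
      | empty => simpa using ach_zero (H := H)
      | @insert a t ha ih =>
        have := ach_add (ach_smul (s a) (hsingle a)) ih
        convert this using 2 with y
        rw [Finset.sum_insert ha]
    exact this Finset.univ
  obtain ⟨w, hw⟩ := hsum
  refine ⟨w, fun v => ?_⟩
  rw [hw v]
  simp
end

section
/- Suppose G is connected, the subgraph of G induced on M is connected and nonempty, and the subgraph of G induced on V \ M has exactly two connected components H₁ = (V₁, E₁) and H₂ = (V₂, E₂). Suppose further that the induced subgraph on M is bipartite with partite sets M₁ and M₂, and let k_{ij} be the number of edges of G joining a vertex of H_i to a vertex of M_j (for i, j ∈ {1, 2}). If k₁₁ = k₂₁, k₁₂ = k₂₂ and |E₁| = |E₂|, then there exists a nonzero stationary state ψ (Uψ = ψ) such that Σ_{(u,v) ∈ A(G)} ψ(u,v) = 0, i.e., ψ is orthogonal to the uniform initial state which has amplitude 1/√(2m) on every arc. -/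
open Finset

section Counting

variable {V : Type*} [Fintype V] [DecidableEq V] (G : SimpleGraph V) [DecidableRel G.Adj]

/-- The number (as a complex number) of ordered pairs `(v, w)` with `v ∈ A`, `w ∈ B`,
`v` adjacent to `w`. -/
noncomputable def SSc (A B : Set V) [DecidablePred (· ∈ A)] [DecidablePred (· ∈ B)] : ℂ :=
  ∑ v : V, ∑ w : V, if v ∈ A ∧ w ∈ B ∧ G.Adj v w then 1 else 0

lemma SSc_comm (A B : Set V) [DecidablePred (· ∈ A)] [DecidablePred (· ∈ B)] :
    SSc G A B = SSc G B A := by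
  rw [SSc, SSc, Finset.sum_comm]
  refine Finset.sum_congr rfl fun v _ => Finset.sum_congr rfl fun w _ => ?_
  exact if_congr ⟨fun ⟨h1, h2, h3⟩ => ⟨h2, h1, h3.symm⟩, fun ⟨h1, h2, h3⟩ => ⟨h2, h1, h3.symm⟩⟩
    rfl rfl

lemma SSc_eq_ncard (A B : Set V) [DecidablePred (· ∈ A)] [DecidablePred (· ∈ B)] :
    SSc G A B = ({p : V × V | p.1 ∈ A ∧ p.2 ∈ B ∧ G.Adj p.1 p.2}.ncard : ℂ) := by
  classical
  have h1 : {p : V × V | p.1 ∈ A ∧ p.2 ∈ B ∧ G.Adj p.1 p.2}.ncard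
      = (Finset.univ.filter fun p : V × V => p.1 ∈ A ∧ p.2 ∈ B ∧ G.Adj p.1 p.2).card := by
    rw [← Set.ncard_coe_finset]
    congr 1
    ext p
    simp
  rw [h1, Finset.card_filter]
  push_cast
  rw [SSc]
  have := (Fintype.sum_prod_type' (f := fun (v w : V) =>
    if v ∈ A ∧ w ∈ B ∧ G.Adj v w then (1:ℂ) else 0)).symm
  refine this.trans ?_
  refine Finset.sum_congr rfl fun p _ => ?_
  split_ifs <;> simp

lemma SSc_nested (A B : Set V) [DecidablePred (· ∈ A)] [DecidablePred (· ∈ B)] :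
    ∑ v : V, (if v ∈ A then (∑ w ∈ G.neighborFinset v, if w ∈ B then (1 : ℂ) else 0) else 0)
      = SSc G A B := by
  rw [SSc]
  refine Finset.sum_congr rfl fun v _ => ?_
  by_cases hv : v ∈ A
  · rw [if_pos hv, SimpleGraph.neighborFinset_eq_filter, Finset.sum_filter]
    refine Finset.sum_congr rfl fun w _ => ?_
    by_cases h1 : G.Adj v w <;> by_cases h2 : w ∈ B <;> simp [h1, h2, hv]
  · rw [if_neg hv]
    symm
    refine Finset.sum_eq_zero fun w _ => ?_
    rw [if_neg]
    rintro ⟨h, -⟩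
    exact hv h

lemma SSc_self (A : Set V) [DecidablePred (· ∈ A)] :
    SSc G A A = 2 * ({e : Sym2 V | e ∈ G.edgeSet ∧ ∀ v ∈ e, v ∈ A}.ncard : ℂ) := by
  classical
  let GA : SimpleGraph V :=
    { Adj := fun u v => u ∈ A ∧ v ∈ A ∧ G.Adj u v
      symm := ⟨by rintro u v ⟨h1, h2, h3⟩; exact ⟨h2, h1, h3.symm⟩⟩
      loopless := ⟨fun v h => G.loopless.irrefl v h.2.2⟩ }
  have hSS : SSc G A A
      = ∑ x : V × V, if x.1 ∈ A ∧ x.2 ∈ A ∧ G.Adj x.1 x.2 then (1 : ℂ) else 0 := by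
    rw [SSc]
    exact (Fintype.sum_prod_type' (f := fun (v w : V) =>
      if v ∈ A ∧ w ∈ A ∧ G.Adj v w then (1 : ℂ) else 0)).symm
  haveI hdec : DecidableRel GA.Adj := fun u v => instDecidableAnd
  have hset : {e : Sym2 V | e ∈ G.edgeSet ∧ ∀ v ∈ e, v ∈ A} = GA.edgeSet := by
    ext e
    refine Sym2.ind (fun u v => ?_) e
    simp only [Set.mem_setOf_eq, SimpleGraph.mem_edgeSet, Sym2.mem_iff]
    constructor
    · rintro ⟨h1, h2⟩
      exact ⟨h2 u (Or.inl rfl), h2 v (Or.inr rfl), h1⟩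
    · rintro ⟨h1, h2, h3⟩
      refine ⟨h3, ?_⟩
      rintro x (rfl | rfl) <;> assumption
  have hcard : {e : Sym2 V | e ∈ G.edgeSet ∧ ∀ v ∈ e, v ∈ A}.ncard = GA.edgeFinset.card := by
    rw [hset, ← SimpleGraph.coe_edgeFinset, Set.ncard_coe_finset]
  have h2m := GA.two_mul_card_edgeFinset
  have hfilter : (Finset.univ.filter fun ((x, y) : V × V) => GA.Adj x y)
      = (Finset.univ.filter fun (x : V × V) => x.1 ∈ A ∧ x.2 ∈ A ∧ G.Adj x.1 x.2) := by
    refine Finset.filter_congr fun p _ => ?_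
    obtain ⟨a, b⟩ := p
    exact Iff.rfl
  rw [hfilter] at h2m
  have h5 : SSc G A A = ((2 * GA.edgeFinset.card : ℕ) : ℂ) := by
    rw [h2m, Finset.card_filter, hSS]
    push_cast
    refine Finset.sum_congr rfl fun p _ => ?_
    split_ifs <;> simp
  rw [h5, hcard]
  push_cast
  ring

end Counting


lemma flow_exists {V : Type*} [Fintype V] [DecidableEq V] (G : SimpleGraph V)
    [DecidableRel G.Adj] (M M₁ M₂ : Set V) [DecidablePred (· ∈ M)]
    [DecidablePred (· ∈ M₁)] [DecidablePred (· ∈ M₂)]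
    (hM12 : M₁ ∪ M₂ = M) (hdisj : Disjoint M₁ M₂)
    (hconn : (G.induce M).Connected)
    (hbip : ∀ u ∈ M, ∀ v ∈ M, G.Adj u v → (u ∈ M₁ ∧ v ∈ M₂) ∨ (u ∈ M₂ ∧ v ∈ M₁))
    (b : V → ℂ)
    (hbal : ∑ v : V, (if v ∈ M₁ then b v else 0) = ∑ v : V, (if v ∈ M₂ then b v else 0)) :
    ∃ x : V → V → ℂ, (∀ u v, x u v = x v u) ∧
      ∀ v ∈ M, ∑ w ∈ (G.neighborFinset v).filter (· ∈ M), x v w = b v := by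
  classical
  -- basic membership facts
  have hM₁M : M₁ ⊆ M := hM12 ▸ Set.subset_union_left
  have hM₂M : M₂ ⊆ M := hM12 ▸ Set.subset_union_right
  have hMsplit : ∀ x ∈ M, x ∈ M₁ ∨ x ∈ M₂ := fun x hx => (hM12.symm ▸ hx : x ∈ M₁ ∪ M₂)
  -- set up the linear algebra
  let E := EuclideanSpace ℂ ↥M
  let z : (↥M × ↥M) → E := fun p =>
    if G.Adj ↑p.1 ↑p.2 then EuclideanSpace.single p.1 1 + EuclideanSpace.single p.2 1 else 0
  let T := Fintype.linearCombination ℂ z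
  let K := LinearMap.range T
  let bb : E := WithLp.toLp 2 (fun v => b ↑v)
  let σ : ↥M → ℂ := fun v => if (v : V) ∈ M₁ then 1 else -1
  have hσσ : ∀ v : ↥M, σ v * σ v = 1 := by
    intro v
    by_cases h : (v : V) ∈ M₁ <;> simp [σ, h]
  have hσconj : ∀ v : ↥M, (starRingEnd ℂ) (σ v) = σ v := by
    intro v
    by_cases h : (v : V) ∈ M₁ <;> simp [σ, h]
  have hbbmem : bb ∈ K := by
    have : K = Kᗮᗮ := (Submodule.orthogonal_orthogonal K).symm
    rw [this, Submodule.mem_orthogonal]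
    intro y hy
    -- from orthogonality to range, y u + y w = 0 on edges inside M
    have hedge : ∀ u w : ↥M, G.Adj ↑u ↑w → y u + y w = 0 := by
      intro u w hadj
      have hzmem : z (u, w) ∈ K := ⟨Pi.single (u, w) 1, by
        show Fintype.linearCombination ℂ z (Pi.single (u, w) 1) = z (u, w)
        rw [Fintype.linearCombination_apply_single, one_smul]⟩
      have h0 := (Submodule.mem_orthogonal K y).mp hy (z (u, w)) hzmem
      have hz : z (u, w) = EuclideanSpace.single u 1 + EuclideanSpace.single w 1 :=
        if_pos hadj
      rw [hz, inner_add_left, EuclideanSpace.inner_single_left,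
        EuclideanSpace.inner_single_left] at h0
      simpa using h0
    -- bipartite sign flip along edges
    have hσflip : ∀ u w : ↥M, G.Adj ↑u ↑w → σ u = -σ w := by
      intro u w hadj
      rcases hbip ↑u u.2 ↑w w.2 hadj with ⟨h1, h2⟩ | ⟨h1, h2⟩
      · have h3 : (w : V) ∉ M₁ := Set.disjoint_right.mp hdisj h2
        simp [σ, h1, h3]
      · have h3 : (u : V) ∉ M₁ := Set.disjoint_right.mp hdisj h1
        simp [σ, h2, h3]
    -- y * σ is constant along walks in the induced graph
    have hkey : ∀ (a c : ↥M) (w : (G.induce M).Walk a c), y a * σ a = y c * σ c := by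
      intro a c w
      induction w with
      | nil => rfl
      | @cons a' b' c' h p ih =>
        have hadj : G.Adj ↑a' ↑b' := h
        have h1 : y a' = -y b' := eq_neg_of_add_eq_zero_left (hedge a' b' hadj)
        have h2 : σ a' = -σ b' := hσflip a' b' hadj
        rw [← ih, h1, h2]
        ring
    obtain ⟨v₀⟩ := hconn.nonempty
    have hC : ∀ v : ↥M, y v = (y v₀ * σ v₀) * σ v := by
      intro v
      obtain ⟨w⟩ := hconn.preconnected v v₀
      have h1 := hkey v v₀ w
      calc y v = y v * (σ v * σ v) := by rw [hσσ]; ring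
        _ = (y v * σ v) * σ v := by ring
        _ = (y v₀ * σ v₀) * σ v := by rw [h1]
    -- compute the inner product
    have hinner : (inner ℂ (y) (bb) : ℂ) = (starRingEnd ℂ) (y v₀ * σ v₀) * (∑ v : ↥M, σ v * b ↑v) := by
      rw [PiLp.inner_apply]
      rw [Finset.mul_sum]
      refine Finset.sum_congr rfl fun v _ => ?_
      rw [hC v]
      have hbbv : bb v = b ↑v := rfl
      rw [RCLike.inner_apply, hbbv, map_mul, map_mul, hσconj v]
      ring
    have hsub : ∀ (N : Set V) (_ : DecidablePred (· ∈ N)) (_ : N ⊆ M) (f : V → ℂ),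
        ∑ v : ↥M, (if (v : V) ∈ N then f ↑v else 0) = ∑ v : V, (if v ∈ N then f v else 0) := by
      intro N dN hNM f
      rw [← Finset.sum_subtype (Finset.univ.filter (· ∈ M))
        (fun x => by simp) (fun v => if v ∈ N then f v else 0)]
      rw [Finset.sum_filter]
      refine Finset.sum_congr rfl fun v _ => ?_
      by_cases hv : v ∈ M
      · rw [if_pos hv]
      · rw [if_neg hv, if_neg (fun hvN => hv (hNM hvN))]
    have hzero : ∑ v : ↥M, σ v * b ↑v = 0 := by
      have h1 : ∀ v : ↥M, σ v * b ↑v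
          = (if (v : V) ∈ M₁ then b ↑v else 0) - (if (v : V) ∈ M₂ then b ↑v else 0) := by
        intro v
        by_cases h : (v : V) ∈ M₁
        · have h2 : (v : V) ∉ M₂ := Set.disjoint_left.mp hdisj h
          simp [σ, h, h2]
        · have h2 : (v : V) ∈ M₂ := (hMsplit ↑v v.2).resolve_left h
          simp [σ, h, h2]
      rw [Finset.sum_congr rfl fun v _ => h1 v, Finset.sum_sub_distrib]
      rw [hsub M₁ inferInstance hM₁M b, hsub M₂ inferInstance hM₂M b, hbal, sub_self]
    rw [hinner, hzero, mul_zero]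
  -- extract the coefficients
  obtain ⟨x₀, hx₀⟩ := hbbmem
  refine ⟨fun a c => if h : a ∈ M ∧ c ∈ M ∧ G.Adj a c then
    x₀ (⟨a, h.1⟩, ⟨c, h.2.1⟩) + x₀ (⟨c, h.2.1⟩, ⟨a, h.1⟩) else 0, ?_, ?_⟩
  · intro u v
    dsimp only
    by_cases h : u ∈ M ∧ v ∈ M ∧ G.Adj u v
    · have h' : v ∈ M ∧ u ∈ M ∧ G.Adj v u := ⟨h.2.1, h.1, h.2.2.symm⟩
      rw [dif_pos h, dif_pos h']
      ring
    · have h' : ¬(v ∈ M ∧ u ∈ M ∧ G.Adj v u) := fun h' => h ⟨h'.2.1, h'.1, h'.2.2.symm⟩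
      rw [dif_neg h, dif_neg h']
  · intro v hv
    dsimp only
    -- evaluate T x₀ = bb at the coordinate ⟨v, hv⟩ via inner with a single
    have h1 : (inner ℂ (EuclideanSpace.single (⟨v, hv⟩ : ↥M) (1 : ℂ)) (T x₀) : ℂ) = b v := by
      rw [hx₀]
      rw [EuclideanSpace.inner_single_left]
      simp only [map_one, one_mul]
      rfl
    have h2 : (inner ℂ (EuclideanSpace.single (⟨v, hv⟩ : ↥M) (1 : ℂ)) (T x₀) : ℂ)
        = ∑ p : ↥M × ↥M, x₀ p *
          (if G.Adj ↑p.1 ↑p.2 then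
            ((if p.1 = (⟨v, hv⟩ : ↥M) then (1 : ℂ) else 0)
              + (if p.2 = (⟨v, hv⟩ : ↥M) then 1 else 0)) else 0) := by
      rw [Fintype.linearCombination_apply, inner_sum]
      refine Finset.sum_congr rfl fun p _ => ?_
      rw [inner_smul_right]
      congr 1
      by_cases h : G.Adj ↑p.1 ↑p.2
      · rw [if_pos h]
        have hz : z p = EuclideanSpace.single p.1 1 + EuclideanSpace.single p.2 1 := if_pos h
        rw [hz, inner_add_right, EuclideanSpace.inner_single_right,
          EuclideanSpace.inner_single_right]
        simp [EuclideanSpace.single_apply]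
      · rw [if_neg h]
        have hz : z p = 0 := if_neg h
        rw [hz, inner_zero_right]
    have h3 : ∀ p : ↥M × ↥M, x₀ p *
          (if G.Adj ↑p.1 ↑p.2 then
            ((if p.1 = (⟨v, hv⟩ : ↥M) then (1 : ℂ) else 0)
              + (if p.2 = (⟨v, hv⟩ : ↥M) then 1 else 0)) else 0)
        = (if p.1 = (⟨v, hv⟩ : ↥M) then (if G.Adj ↑p.1 ↑p.2 then x₀ p else 0) else 0)
          + (if p.2 = (⟨v, hv⟩ : ↥M) then (if G.Adj ↑p.1 ↑p.2 then x₀ p else 0) else 0) := by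
      intro p
      split_ifs <;> ring
    have h4 : b v = (∑ p : ↥M × ↥M,
          if p.1 = (⟨v, hv⟩ : ↥M) then (if G.Adj ↑p.1 ↑p.2 then x₀ p else 0) else 0)
        + ∑ p : ↥M × ↥M,
          if p.2 = (⟨v, hv⟩ : ↥M) then (if G.Adj ↑p.1 ↑p.2 then x₀ p else 0) else 0 := by
      rw [← h1, h2, Finset.sum_congr rfl fun p _ => h3 p, Finset.sum_add_distrib]
    have h5 : (∑ p : ↥M × ↥M,
          if p.1 = (⟨v, hv⟩ : ↥M) then (if G.Adj ↑p.1 ↑p.2 then x₀ p else 0) else 0)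
        = ∑ c : ↥M, (if G.Adj v ↑c then x₀ (⟨v, hv⟩, c) else 0) := by
      rw [Fintype.sum_prod_type (f := fun p : ↥M × ↥M =>
        if p.1 = (⟨v, hv⟩ : ↥M) then (if G.Adj ↑p.1 ↑p.2 then x₀ p else 0) else 0)]
      rw [Finset.sum_comm]
      refine Finset.sum_congr rfl fun c _ => ?_
      rw [Finset.sum_eq_single (⟨v, hv⟩ : ↥M)]
      · simp
      · intro a _ ha
        rw [if_neg ha]
      · intro h
        exact absurd (Finset.mem_univ _) h
    have h6 : (∑ p : ↥M × ↥M,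
          if p.2 = (⟨v, hv⟩ : ↥M) then (if G.Adj ↑p.1 ↑p.2 then x₀ p else 0) else 0)
        = ∑ c : ↥M, (if G.Adj ↑c v then x₀ (c, ⟨v, hv⟩) else 0) := by
      rw [Fintype.sum_prod_type (f := fun p : ↥M × ↥M =>
        if p.2 = (⟨v, hv⟩ : ↥M) then (if G.Adj ↑p.1 ↑p.2 then x₀ p else 0) else 0)]
      refine Finset.sum_congr rfl fun c _ => ?_
      rw [Finset.sum_eq_single (⟨v, hv⟩ : ↥M)]
      · simp
      · intro a _ ha
        rw [if_neg ha]
      · intro h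
        exact absurd (Finset.mem_univ _) h
    have h7 : b v = ∑ c : ↥M, (if G.Adj v ↑c then x₀ (⟨v, hv⟩, c) + x₀ (c, ⟨v, hv⟩) else 0) := by
      rw [h4, h5, h6, ← Finset.sum_add_distrib]
      refine Finset.sum_congr rfl fun c _ => ?_
      by_cases h : G.Adj v ↑c
      · rw [if_pos h, if_pos h.symm, if_pos h]
      · rw [if_neg h, if_neg (fun h' => h h'.symm), if_neg h, add_zero]
    rw [Finset.sum_filter, SimpleGraph.neighborFinset_eq_filter, Finset.sum_filter, h7]
    have h8 : ∀ c : ↥M, (if G.Adj v ↑c then x₀ (⟨v, hv⟩, c) + x₀ (c, ⟨v, hv⟩) else 0)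
        = (if G.Adj v ↑c then (if h' : v ∈ M ∧ (c : V) ∈ M ∧ G.Adj v ↑c then
            x₀ (⟨v, h'.1⟩, ⟨↑c, h'.2.1⟩) + x₀ (⟨↑c, h'.2.1⟩, ⟨v, h'.1⟩) else 0) else 0) := by
      intro c
      by_cases h : G.Adj v ↑c
      · rw [if_pos h, if_pos h, dif_pos ⟨hv, c.2, h⟩]
      · rw [if_neg h, if_neg h]
    rw [Finset.sum_congr rfl fun c _ => h8 c]
    rw [← Finset.sum_subtype (Finset.univ.filter (· ∈ M)) (fun x => by simp)
      (fun w => if G.Adj v w then (if h' : v ∈ M ∧ w ∈ M ∧ G.Adj v w then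
        x₀ (⟨v, h'.1⟩, ⟨w, h'.2.1⟩) + x₀ (⟨w, h'.2.1⟩, ⟨v, h'.1⟩) else 0) else 0)]
    rw [Finset.sum_filter]
    refine Finset.sum_congr rfl fun w _ => ?_
    split_ifs <;> rfl

theorem stmt8 {V : Type*} [Fintype V] [DecidableEq V] (G : SimpleGraph V) [DecidableRel G.Adj]
    (hdeg : ∀ v : V, 0 < G.degree v)
    (m : ℕ) (hm : m = G.edgeFinset.card)
    (M : Set V) [DecidablePred (· ∈ M)]
    (hG : G.Connected) (hM : M.Nonempty) (hMconn : (G.induce M).Connected)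
    -- the induced subgraph on `V \ M` has exactly two connected components `H₁` and `H₂`,
    -- with vertex sets `V₁` and `V₂`
    (V₁ V₂ : Set V) (hV12 : V₁ ∪ V₂ = Mᶜ) (hV12disj : Disjoint V₁ V₂)
    (hH₁ : (G.induce V₁).Connected) (hH₂ : (G.induce V₂).Connected)
    (hsep : ∀ u ∈ V₁, ∀ v ∈ V₂, ¬ G.Adj u v)
    -- the induced subgraph on `M` is bipartite with partite sets `M₁` and `M₂`
    (M₁ M₂ : Set V) (hM12 : M₁ ∪ M₂ = M) (hM12disj : Disjoint M₁ M₂)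
    (hbip : ∀ u ∈ M, ∀ v ∈ M, G.Adj u v → (u ∈ M₁ ∧ v ∈ M₂) ∨ (u ∈ M₂ ∧ v ∈ M₁))
    -- `k₁₁ = k₂₁`: the numbers of edges joining `H₁` to `M₁` and `H₂` to `M₁` agree
    (hk1 : {p : V × V | p.1 ∈ V₁ ∧ p.2 ∈ M₁ ∧ G.Adj p.1 p.2}.ncard
         = {p : V × V | p.1 ∈ V₂ ∧ p.2 ∈ M₁ ∧ G.Adj p.1 p.2}.ncard)
    -- `k₁₂ = k₂₂`: the numbers of edges joining `H₁` to `M₂` and `H₂` to `M₂` agree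
    (hk2 : {p : V × V | p.1 ∈ V₁ ∧ p.2 ∈ M₂ ∧ G.Adj p.1 p.2}.ncard
         = {p : V × V | p.1 ∈ V₂ ∧ p.2 ∈ M₂ ∧ G.Adj p.1 p.2}.ncard)
    -- `|E₁| = |E₂|`
    (hE : {e : Sym2 V | e ∈ G.edgeSet ∧ ∀ v ∈ e, v ∈ V₁}.ncard
        = {e : Sym2 V | e ∈ G.edgeSet ∧ ∀ v ∈ e, v ∈ V₂}.ncard) :
    ∃ ψ : Arc G → ℂ, ψ ≠ 0 ∧ walkOp G M ψ = ψ ∧ ∑ a : Arc G, ψ a = 0 := by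
  classical
  haveI dV₁ : DecidablePred (· ∈ V₁) := Classical.decPred _
  haveI dV₂ : DecidablePred (· ∈ V₂) := Classical.decPred _
  haveI dM₁ : DecidablePred (· ∈ M₁) := Classical.decPred _
  haveI dM₂ : DecidablePred (· ∈ M₂) := Classical.decPred _
  -- membership helpers
  have hV₁M : ∀ x, x ∈ V₁ → x ∉ M := by
    intro x hx
    have h : x ∈ Mᶜ := by rw [← hV12]; exact Or.inl hx
    exact h
  have hV₂M : ∀ x, x ∈ V₂ → x ∉ M := by
    intro x hx
    have h : x ∈ Mᶜ := by rw [← hV12]; exact Or.inr hx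
    exact h
  have hnotM : ∀ x, x ∉ M → x ∈ V₁ ∨ x ∈ V₂ := by
    intro x hx
    have h : x ∈ V₁ ∪ V₂ := by rw [hV12]; exact hx
    exact h
  have hM₁M : M₁ ⊆ M := hM12 ▸ Set.subset_union_left
  have hM₂M : M₂ ⊆ M := hM12 ▸ Set.subset_union_right
  have hMsplit : ∀ x, x ∈ M → x ∈ M₁ ∨ x ∈ M₂ := by
    intro x hx
    have h : x ∈ M₁ ∪ M₂ := by rw [hM12]; exact hx
    exact h
  -- the sign on the unmarked components
  set γ : V → ℂ := fun v => if v ∈ V₁ then 1 else -1 with hγdef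
  -- pointwise indicator identity
  have hind : ∀ w : V, (if w ∉ M then γ w else 0)
      = (if w ∈ V₁ then (1 : ℂ) else 0) - (if w ∈ V₂ then 1 else 0) := by
    intro w
    by_cases hw : w ∈ M
    · have h1 : w ∉ V₁ := fun h => hV₁M w h hw
      have h2 : w ∉ V₂ := fun h => hV₂M w h hw
      simp [hw, h1, h2]
    · rcases hnotM w hw with h1 | h1
      · have h2 : w ∉ V₂ := Set.disjoint_left.mp hV12disj h1
        simp [hw, h1, h2, hγdef]
      · have h2 : w ∉ V₁ := Set.disjoint_right.mp hV12disj h1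
        simp [hw, h1, h2, hγdef]
  -- the demand function
  set b : V → ℂ := fun v => -∑ w ∈ (G.neighborFinset v).filter (· ∉ M), γ w with hbdef
  have hb1 : ∀ v : V, b v = -(∑ w ∈ G.neighborFinset v, if w ∈ V₁ then (1 : ℂ) else 0)
      + ∑ w ∈ G.neighborFinset v, (if w ∈ V₂ then (1 : ℂ) else 0) := by
    intro v
    rw [hbdef]
    dsimp only
    rw [Finset.sum_filter, Finset.sum_congr rfl fun w _ => hind w, Finset.sum_sub_distrib]
    ring
  -- the balance condition
  have hbN : ∀ (N : Set V) (_ : DecidablePred (· ∈ N)),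
      ∑ v : V, (if v ∈ N then b v else 0) = -SSc G N V₁ + SSc G N V₂ := by
    intro N dN
    have h1 : ∀ v : V, (if v ∈ N then b v else 0)
        = -(if v ∈ N then (∑ w ∈ G.neighborFinset v, if w ∈ V₁ then (1 : ℂ) else 0) else 0)
          + (if v ∈ N then (∑ w ∈ G.neighborFinset v, if w ∈ V₂ then (1 : ℂ) else 0) else 0) := by
      intro v
      by_cases hv : v ∈ N
      · rw [if_pos hv, if_pos hv, if_pos hv, hb1 v]
      · rw [if_neg hv, if_neg hv, if_neg hv]
        ring
    rw [Finset.sum_congr rfl fun v _ => h1 v, Finset.sum_add_distrib, Finset.sum_neg_distrib,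
      SSc_nested, SSc_nested]
  have e1 : SSc G M₁ V₁ = SSc G M₁ V₂ := by
    rw [SSc_comm G M₁ V₁, SSc_comm G M₁ V₂, SSc_eq_ncard G V₁ M₁, SSc_eq_ncard G V₂ M₁, hk1]
  have e2 : SSc G M₂ V₁ = SSc G M₂ V₂ := by
    rw [SSc_comm G M₂ V₁, SSc_comm G M₂ V₂, SSc_eq_ncard G V₁ M₂, SSc_eq_ncard G V₂ M₂, hk2]
  have hbal : ∑ v : V, (if v ∈ M₁ then b v else 0) = ∑ v : V, (if v ∈ M₂ then b v else 0) := by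
    rw [hbN M₁ dM₁, hbN M₂ dM₂, e1, e2]
    ring
  -- get the flow on the marked part
  obtain ⟨x, hxsymm, hxflow⟩ := flow_exists G M M₁ M₂ hM12 hM12disj hMconn hbip b hbal
  -- the stationary state
  set Ψ : V → V → ℂ := fun u v => if u ∈ M then (if v ∈ M then x u v else γ v) else γ u
    with hΨdef
  -- vertex sums
  have hS : ∀ v : V, ∑ w ∈ G.neighborFinset v, Ψ v w
      = if v ∈ M then 0 else (G.degree v : ℂ) * γ v := by
    intro v
    by_cases hv : v ∈ M
    · rw [if_pos hv]
      have h1 : ∀ w, Ψ v w = if w ∈ M then x v w else γ w := by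
        intro w
        rw [hΨdef]
        dsimp only
        rw [if_pos hv]
      rw [Finset.sum_congr rfl fun w _ => h1 w, Finset.sum_ite]
      rw [hxflow v hv]
      have h2 : ∑ w ∈ (G.neighborFinset v).filter (fun w => ¬ w ∈ M), γ w = -b v := by
        rw [hbdef]
        dsimp only
        rw [neg_neg]
      rw [h2, add_neg_cancel]
    · rw [if_neg hv]
      have h1 : ∀ w, Ψ v w = γ v := by
        intro w
        rw [hΨdef]
        dsimp only
        rw [if_neg hv]
      rw [Finset.sum_congr rfl fun w _ => h1 w, Finset.sum_const, nsmul_eq_mul]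
      rfl
  -- equal signs across unmarked edges
  have hγadj : ∀ u v : V, u ∉ M → v ∉ M → G.Adj u v → γ u = γ v := by
    intro u v hu hv hadj
    rcases hnotM u hu with h1 | h1 <;> rcases hnotM v hv with h2 | h2
    · simp [hγdef, h1, h2]
    · exact absurd hadj (hsep u h1 v h2)
    · exact absurd hadj.symm (hsep v h2 u h1)
    · have h3 : u ∉ V₁ := Set.disjoint_right.mp hV12disj h1
      have h4 : v ∉ V₁ := Set.disjoint_right.mp hV12disj h2
      simp [hγdef, h3, h4]
  -- symmetry across marked vertices
  have hΨsymm : ∀ u v : V, v ∈ M → G.Adj u v → Ψ v u = Ψ u v := by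
    intro u v hv hadj
    by_cases hu : u ∈ M
    · rw [hΨdef]
      dsimp only
      rw [if_pos hv, if_pos hu, if_pos hu, if_pos hv, hxsymm v u]
    · rw [hΨdef]
      dsimp only
      rw [if_pos hv, if_neg hu, if_neg hu]
  refine ⟨fun a => Ψ a.1.1 a.1.2, ?_, ?_, ?_⟩
  · -- nonzero
    obtain ⟨⟨u, hu⟩⟩ := hH₁.nonempty
    obtain ⟨w, hw⟩ := Finset.card_pos.mp (hdeg u)
    have hadj : G.Adj u w := (G.mem_neighborFinset u w).mp hw
    intro h0
    have h2 := congrFun h0 ⟨(u, w), hadj⟩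
    have hunm : u ∉ M := hV₁M u hu
    simp only [hΨdef, hγdef, Pi.zero_apply, if_neg hunm, if_pos hu] at h2
    exact one_ne_zero h2
  · -- stationarity
    funext a
    obtain ⟨⟨u, v⟩, huv⟩ := a
    show (if v ∈ M then (-1 : ℂ) else 1) *
      ((2 / (G.degree v : ℂ)) *
        (∑ w ∈ (G.neighborFinset v).attach, Ψ v ↑w) - Ψ v u) = Ψ u v
    rw [Finset.sum_attach (G.neighborFinset v) (fun w => Ψ v w), hS v]
    by_cases hv : v ∈ M
    · rw [if_pos hv, if_pos hv, hΨsymm u v hv huv]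
      ring
    · rw [if_neg hv, if_neg hv]
      have hd : (G.degree v : ℂ) ≠ 0 := Nat.cast_ne_zero.mpr (hdeg v).ne'
      have h2 : 2 / (G.degree v : ℂ) * ((G.degree v : ℂ) * γ v) = 2 * γ v := by
        field_simp
      rw [h2]
      have h3 : Ψ v u = γ v := by rw [hΨdef]; dsimp only; rw [if_neg hv]
      have h4 : Ψ u v = γ v := by
        by_cases hu : u ∈ M
        · rw [hΨdef]; dsimp only; rw [if_pos hu, if_neg hv]
        · rw [hΨdef]; dsimp only; rw [if_neg hu]
          exact hγadj u v hu hv huv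
      rw [h3, h4]
      ring
  · -- orthogonality to the uniform state
    rw [show (∑ a : Arc G, Ψ a.1.1 a.1.2)
        = ∑ p ∈ Finset.univ.filter (fun p : V × V => G.Adj p.1 p.2), Ψ p.1 p.2 from
      (Finset.sum_subtype (Finset.univ.filter fun p : V × V => G.Adj p.1 p.2)
        (fun q => by simp) (fun p => Ψ p.1 p.2)).symm]
    rw [Finset.sum_filter]
    have hprod := Fintype.sum_prod_type' (f := fun (a c : V) =>
      if G.Adj a c then Ψ a c else 0)
    rw [hprod]
    have hnb : ∀ v : V, ∑ w : V, (if G.Adj v w then Ψ v w else 0)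
        = ∑ w ∈ G.neighborFinset v, Ψ v w := by
      intro v
      rw [SimpleGraph.neighborFinset_eq_filter, Finset.sum_filter]
    rw [Finset.sum_congr rfl fun v _ => hnb v, Finset.sum_congr rfl fun v _ => hS v]
    have h5 : ∀ v : V, (if v ∈ M then (0 : ℂ) else (G.degree v : ℂ) * γ v)
        = (if v ∈ V₁ then (G.degree v : ℂ) else 0) - (if v ∈ V₂ then (G.degree v : ℂ) else 0) := by
      intro v
      by_cases hv : v ∈ M
      · have h1 : v ∉ V₁ := fun h => hV₁M v h hv
        have h2 : v ∉ V₂ := fun h => hV₂M v h hv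
        simp [hv, h1, h2]
      · rcases hnotM v hv with h1 | h1
        · have h2 : v ∉ V₂ := Set.disjoint_left.mp hV12disj h1
          simp [hv, h1, h2, hγdef]
        · have h2 : v ∉ V₁ := Set.disjoint_right.mp hV12disj h1
          simp [hv, h1, h2, hγdef]
    rw [Finset.sum_congr rfl fun v _ => h5 v, Finset.sum_sub_distrib]
    -- degree sums decompose into the four classes
    have hone : ∀ w : V, (if w ∈ V₁ then (1 : ℂ) else 0) + (if w ∈ V₂ then 1 else 0)
        + (if w ∈ M₁ then 1 else 0) + (if w ∈ M₂ then 1 else 0) = 1 := by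
      intro w
      by_cases hw : w ∈ M
      · have h1 : w ∉ V₁ := fun h => hV₁M w h hw
        have h2 : w ∉ V₂ := fun h => hV₂M w h hw
        rcases hMsplit w hw with h3 | h3
        · have h4 : w ∉ M₂ := Set.disjoint_left.mp hM12disj h3
          simp [h1, h2, h3, h4]
        · have h4 : w ∉ M₁ := Set.disjoint_right.mp hM12disj h3
          simp [h1, h2, h3, h4]
      · have h3 : w ∉ M₁ := fun h => hw (hM₁M h)
        have h4 : w ∉ M₂ := fun h => hw (hM₂M h)
        rcases hnotM w hw with h1 | h1
        · have h2 : w ∉ V₂ := Set.disjoint_left.mp hV12disj h1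
          simp [h1, h2, h3, h4]
        · have h2 : w ∉ V₁ := Set.disjoint_right.mp hV12disj h1
          simp [h1, h2, h3, h4]
    have hD : ∀ (N : Set V) (_ : DecidablePred (· ∈ N)),
        ∑ v : V, (if v ∈ N then (G.degree v : ℂ) else 0)
          = SSc G N V₁ + SSc G N V₂ + SSc G N M₁ + SSc G N M₂ := by
      intro N dN
      have h1 : ∀ v : V, (if v ∈ N then (G.degree v : ℂ) else 0)
          = (if v ∈ N then (∑ w ∈ G.neighborFinset v, if w ∈ V₁ then (1 : ℂ) else 0) else 0)
            + (if v ∈ N then (∑ w ∈ G.neighborFinset v, if w ∈ V₂ then (1 : ℂ) else 0) else 0)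
            + (if v ∈ N then (∑ w ∈ G.neighborFinset v, if w ∈ M₁ then (1 : ℂ) else 0) else 0)
            + (if v ∈ N then (∑ w ∈ G.neighborFinset v, if w ∈ M₂ then (1 : ℂ) else 0) else 0) := by
        intro v
        by_cases hv : v ∈ N
        · simp only [if_pos hv]
          have hdv : (G.degree v : ℂ) = ∑ w ∈ G.neighborFinset v, (1 : ℂ) := by
            rw [Finset.sum_const, nsmul_eq_mul, mul_one]
            rfl
          rw [hdv, ← Finset.sum_add_distrib, ← Finset.sum_add_distrib,
            ← Finset.sum_add_distrib]
          exact Finset.sum_congr rfl fun w _ => (hone w).symm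
        · simp only [if_neg hv]
          ring
      rw [Finset.sum_congr rfl fun v _ => h1 v, Finset.sum_add_distrib, Finset.sum_add_distrib,
        Finset.sum_add_distrib, SSc_nested, SSc_nested, SSc_nested, SSc_nested]
    rw [hD V₁ dV₁, hD V₂ dV₂]
    -- the cross terms between V₁ and V₂ vanish
    have hz12 : SSc G V₁ V₂ = 0 := by
      rw [SSc]
      refine Finset.sum_eq_zero fun v _ => Finset.sum_eq_zero fun w _ => ?_
      rw [if_neg]
      rintro ⟨h1, h2, h3⟩
      exact hsep v h1 w h2 h3
    have hz21 : SSc G V₂ V₁ = 0 := by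
      rw [SSc]
      refine Finset.sum_eq_zero fun v _ => Finset.sum_eq_zero fun w _ => ?_
      rw [if_neg]
      rintro ⟨h1, h2, h3⟩
      exact hsep w h2 v h1 h3.symm
    have hEe : SSc G V₁ V₁ = SSc G V₂ V₂ := by
      rw [SSc_self G V₁, SSc_self G V₂, hE]
    have hc1 : SSc G V₁ M₁ = SSc G V₂ M₁ := by
      rw [SSc_eq_ncard G V₁ M₁, SSc_eq_ncard G V₂ M₁, hk1]
    have hc2 : SSc G V₁ M₂ = SSc G V₂ M₂ := by
      rw [SSc_eq_ncard G V₁ M₂, SSc_eq_ncard G V₂ M₂, hk2]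
    rw [hz12, hz21, hEe, hc1, hc2]
    ring
end

section
/- Suppose G is connected, M is a nonempty proper subset of V, the subgraph of G induced on M is connected and bipartite with partite sets M₁ and M₂, and deg_G(M₁) = deg_G(M₂), where deg_G(M_i) = Σ_{v ∈ M_i} deg_G(v) is the total degree (in G) of the vertices of M_i. Then the coined quantum walk on G with marked set M has a stationary state, i.e., there exists a nonzero ψ : A(G) → ℂ with Uψ = ψ. -/
open Finset

set_option linter.unusedSectionVars false

namespace Stmt9Aux

variable {V : Type*} [Fintype V] [DecidableEq V] {G : SimpleGraph V} [DecidableRel G.Adj]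

def pairInd (a b : V) (δ : ℂ) : V → V → ℂ :=
  fun x y => (if x = a ∧ y = b then δ else 0) + (if x = b ∧ y = a then δ else 0)

lemma pairInd_symm (a b : V) (δ : ℂ) (x y : V) : pairInd a b δ x y = pairInd a b δ y x := by
  unfold pairInd
  rw [add_comm]
  congr 1 <;> exact if_congr (by tauto) rfl rfl

def wflow : {a b : V} → G.Walk a b → ℂ → V → V → ℂ
  | _, _, SimpleGraph.Walk.nil, _ => fun _ _ => 0
  | a, _, SimpleGraph.Walk.cons (v := c) _ p, δ =>
      fun x y => pairInd a c δ x y + wflow p (-δ) x y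

lemma wflow_symm {a b : V} (p : G.Walk a b) (δ : ℂ) (x y : V) :
    wflow p δ x y = wflow p δ y x := by
  induction p generalizing δ with
  | nil => rfl
  | cons h q ih => simp only [wflow, pairInd_symm, ih]

lemma wflow_eq_zero {a b : V} (p : G.Walk a b) (δ : ℂ) {S : Set V}
    (hp : ∀ z ∈ p.support, z ∈ S) {x : V} (hx : x ∉ S) (y : V) :
    wflow p δ x y = 0 := by
  induction p generalizing δ with
  | @cons u c w h q ih =>
    have ha : u ∈ S := hp _ (SimpleGraph.Walk.start_mem_support _)
    have hc : c ∈ S := hp c (by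
      rw [SimpleGraph.Walk.support_cons]
      exact List.mem_cons_of_mem _ q.start_mem_support)
    simp only [wflow]
    rw [ih (-δ) (fun z hz => hp z (by
      rw [SimpleGraph.Walk.support_cons]; exact List.mem_cons_of_mem _ hz))]
    have hxa : x ≠ u := fun h' => hx (h' ▸ ha)
    have hxc : x ≠ c := fun h' => hx (h' ▸ hc)
    simp [pairInd, hxa, hxc]
  | nil => rfl

noncomputable def rowSum (G : SimpleGraph V) [DecidableRel G.Adj] (g : V → V → ℂ) (v : V) : ℂ :=
  ∑ w ∈ G.neighborFinset v, g v w

lemma rowSum_pairInd {a b : V} (hab : G.Adj a b) (δ : ℂ) (v : V) :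
    rowSum G (pairInd a b δ) v = (if v = a then δ else 0) + (if v = b then δ else 0) := by
  unfold rowSum pairInd
  rw [Finset.sum_add_distrib]
  congr 1
  · by_cases hv : v = a
    · subst hv
      simp [Finset.sum_ite_eq', hab]
    · simp [hv]
  · by_cases hv : v = b
    · subst hv
      simp [Finset.sum_ite_eq', hab.symm]
    · simp [hv]

lemma rowSum_wflow {a b : V} (p : G.Walk a b) (δ : ℂ) (v : V) :
    rowSum G (wflow p δ) v
      = (if v = a then δ else 0) + (if v = b then (-1 : ℂ) ^ (p.length + 1) * δ else 0) := by
  induction p generalizing δ with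
  | nil =>
    simp only [rowSum, wflow, Finset.sum_const_zero, SimpleGraph.Walk.length_nil]
    split_ifs <;> ring
  | @cons u c w h q ih =>
    have hsplit : rowSum G (wflow (SimpleGraph.Walk.cons h q) δ) v
        = rowSum G (pairInd u c δ) v + rowSum G (wflow q (-δ)) v := by
      unfold rowSum; rw [← Finset.sum_add_distrib]; rfl
    rw [hsplit, rowSum_pairInd h, ih]
    simp only [SimpleGraph.Walk.length_cons, pow_succ]
    split_ifs <;> ring

end Stmt9Aux

namespace Stmt9Aux
variable {V : Type*} [Fintype V] [DecidableEq V] {G : SimpleGraph V} [DecidableRel G.Adj]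

lemma walk_parity {M : Set V} (M₁ M₂ : Finset V)
    (hM12 : (↑M₁ ∪ ↑M₂ : Set V) = M) (hdisj : Disjoint M₁ M₂)
    (hbip : ∀ u ∈ M, ∀ v ∈ M, G.Adj u v → (u ∈ M₁ ∧ v ∈ M₂) ∨ (u ∈ M₂ ∧ v ∈ M₁))
    {a b : V} (p : G.Walk a b) (hp : ∀ z ∈ p.support, z ∈ M) :
    ((a ∈ M₁) ↔ (b ∈ M₁)) ↔ Even p.length := by
  induction p with
  | nil => simp
  | @cons u c w h q ih =>
    have hu : u ∈ M := hp _ (SimpleGraph.Walk.start_mem_support _)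
    have hc : c ∈ M := hp c (by
      rw [SimpleGraph.Walk.support_cons]
      exact List.mem_cons_of_mem _ q.start_mem_support)
    have hq : ∀ z ∈ q.support, z ∈ M := fun z hz => hp z (by
      rw [SimpleGraph.Walk.support_cons]; exact List.mem_cons_of_mem _ hz)
    have hd := Finset.disjoint_left.mp hdisj
    have huc : (u ∈ M₁) ↔ ¬ (c ∈ M₁) := by
      rcases hbip u hu c hc h with ⟨h1, h2⟩ | ⟨h1, h2⟩
      · exact ⟨fun _ hcc => hd hcc h2, fun _ => h1⟩
      · exact ⟨fun hu1 => absurd h1 (fun _ => hd hu1 h1), fun hnc => absurd h2 hnc⟩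
    rw [SimpleGraph.Walk.length_cons, Nat.even_add_one, ← ih hq]
    tauto

lemma exists_good_flow (G : SimpleGraph V) [DecidableRel G.Adj]
    (hdeg : ∀ v : V, 0 < G.degree v)
    (M : Set V) [DecidablePred (· ∈ M)] (hM : M.Nonempty)
    (hMconn : (G.induce M).Connected)
    (M₁ M₂ : Finset V) (hM12 : (↑M₁ ∪ ↑M₂ : Set V) = M) (hM12disj : Disjoint M₁ M₂)
    (hbip : ∀ u ∈ M, ∀ v ∈ M, G.Adj u v → (u ∈ M₁ ∧ v ∈ M₂) ∨ (u ∈ M₂ ∧ v ∈ M₁))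
    (hdegEq : ∑ v ∈ M₁, G.degree v = ∑ v ∈ M₂, G.degree v) :
    ∃ g : V → V → ℂ, (∀ x y, g x y = g y x) ∧ (∀ x, x ∉ M → ∀ y, g x y = 0) ∧
      (∀ x, ∑ w ∈ G.neighborFinset x, g x w = if x ∈ M then -(G.degree x : ℂ) else 0) := by
  classical
  -- both parts are nonempty
  have hM₁ne : M₁.Nonempty := by
    rcases M₁.eq_empty_or_nonempty with h | h
    · exfalso
      rw [h] at hdegEq hM12
      simp only [Finset.sum_empty] at hdegEq
      obtain ⟨x, hx⟩ := hM
      rw [← hM12] at hx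
      simp only [Finset.coe_empty, Set.empty_union, Finset.mem_coe] at hx
      exact absurd (Finset.sum_eq_zero_iff.mp hdegEq.symm x hx) (hdeg x).ne'
    · exact h
  obtain ⟨r, hr1⟩ := hM₁ne
  have hrM : r ∈ M := by rw [← hM12]; exact Or.inl hr1
  -- choose walks inside M from r to every vertex of M
  have hreach : ∀ v, v ∈ M → ∃ p : G.Walk r v, ∀ z ∈ p.support, z ∈ M := by
    intro v hv
    obtain ⟨q⟩ := hMconn.preconnected ⟨r, hrM⟩ ⟨v, hv⟩
    refine ⟨q.map (SimpleGraph.Embedding.induce M).toHom, ?_⟩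
    intro z hz
    replace hz : z ∈ (q.map (SimpleGraph.Embedding.induce M).toHom).support := hz
    rw [SimpleGraph.Walk.support_map] at hz
    obtain ⟨z', _, rfl⟩ := List.mem_map.mp hz
    exact z'.2
  choose wk hwk using hreach
  -- the signed charges
  refine ⟨fun x y => ∑ v ∈ M.toFinset.attach,
      wflow (wk ↑v (Set.mem_toFinset.mp v.2))
        (if (v : V) ∈ M₁ then ((G.degree (v : V) : ℂ)) else -(G.degree (v : V))) x y,
      ?_, ?_, ?_⟩
  · intro x y; exact Finset.sum_congr rfl fun v _ => wflow_symm _ _ _ _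
  · intro x hx y; exact Finset.sum_eq_zero fun v _ => wflow_eq_zero _ _ (hwk _ _) hx y
  · intro x
    rw [Finset.sum_comm]
    have hterm : ∀ v ∈ M.toFinset.attach,
        (∑ w ∈ G.neighborFinset x,
          wflow (wk ↑v (Set.mem_toFinset.mp v.2))
            (if (v : V) ∈ M₁ then ((G.degree (v : V) : ℂ)) else -(G.degree (v : V))) x w)
        = (if x = r then (if (v : V) ∈ M₁ then ((G.degree (v : V) : ℂ)) else -(G.degree (v : V))) else 0)
          + (if x = ↑v then -(G.degree (v : V) : ℂ) else 0) := by
      intro v _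
      have hvM : (v : V) ∈ M := Set.mem_toFinset.mp v.2
      rw [show (∑ w ∈ G.neighborFinset x,
          wflow (wk ↑v (Set.mem_toFinset.mp v.2))
            (if (v : V) ∈ M₁ then ((G.degree (v : V) : ℂ)) else -(G.degree (v : V))) x w)
          = rowSum G (wflow (wk ↑v (Set.mem_toFinset.mp v.2))
            (if (v : V) ∈ M₁ then ((G.degree (v : V) : ℂ)) else -(G.degree (v : V)))) x from rfl]
      rw [rowSum_wflow]
      congr 1
      have hpar := walk_parity M₁ M₂ hM12 hM12disj hbip (wk ↑v hvM) (hwk ↑v hvM)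
      by_cases h1 : (v : V) ∈ M₁
      · have he : Even (wk ↑v hvM).length := hpar.mp (iff_of_true hr1 h1)
        have ho : Odd ((wk ↑v hvM).length + 1) := Even.add_one he
        rw [if_pos h1, ho.neg_one_pow]
        split_ifs <;> ring
      · have hne : ¬ Even (wk ↑v hvM).length := fun he => h1 ((hpar.mpr he).mp hr1)
        have he : Even ((wk ↑v hvM).length + 1) := (Nat.not_even_iff_odd.mp hne).add_one
        rw [if_neg h1, he.neg_one_pow]
        split_ifs <;> ring
    rw [Finset.sum_congr rfl hterm, Finset.sum_add_distrib]
    have hp1 : (∑ v ∈ M.toFinset.attach,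
        (if x = r then (if (v : V) ∈ M₁ then ((G.degree (v : V) : ℂ)) else -(G.degree (v : V))) else 0)) = 0 := by
      by_cases hx : x = r
      · simp only [hx, if_true]
        rw [Finset.sum_attach M.toFinset
          (fun v => if v ∈ M₁ then ((G.degree v : ℂ)) else -(G.degree v))]
        have hMfin : M.toFinset = M₁ ∪ M₂ := by
          ext z
          rw [Set.mem_toFinset, ← hM12]
          simp
        rw [hMfin, Finset.sum_union hM12disj]
        rw [Finset.sum_congr rfl (fun v hv => if_pos hv),
          Finset.sum_congr rfl (fun v (hv : v ∈ M₂) =>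
            if_neg (Finset.disjoint_right.mp hM12disj hv))]
        rw [Finset.sum_neg_distrib]
        have : (∑ v ∈ M₁, (G.degree v : ℂ)) = ∑ v ∈ M₂, (G.degree v : ℂ) := by
          exact_mod_cast congrArg (Nat.cast : ℕ → ℂ) hdegEq
        rw [this]; ring
      · simp [hx]
    have hp2 : (∑ v ∈ M.toFinset.attach, (if x = ↑v then -(G.degree (v : V) : ℂ) else 0))
        = if x ∈ M then -(G.degree x : ℂ) else 0 := by
      rw [Finset.sum_attach M.toFinset (fun v => if x = v then -(G.degree v : ℂ) else 0)]
      rw [Finset.sum_ite_eq M.toFinset x (fun v => -(G.degree v : ℂ))]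
      simp [Set.mem_toFinset]
    rw [hp1, hp2, zero_add]

end Stmt9Aux


theorem stmt9 {V : Type*} [Fintype V] [DecidableEq V] (G : SimpleGraph V) [DecidableRel G.Adj]
    (hdeg : ∀ v : V, 0 < G.degree v)
    (M : Set V) [DecidablePred (· ∈ M)]
    (hG : G.Connected) (hM : M.Nonempty) (hMproper : M ≠ Set.univ)
    (hMconn : (G.induce M).Connected)
    -- the induced subgraph on `M` is bipartite with partite sets `M₁` and `M₂`
    (M₁ M₂ : Finset V) (hM12 : (↑M₁ ∪ ↑M₂ : Set V) = M) (hM12disj : Disjoint M₁ M₂)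
    (hbip : ∀ u ∈ M, ∀ v ∈ M, G.Adj u v → (u ∈ M₁ ∧ v ∈ M₂) ∨ (u ∈ M₂ ∧ v ∈ M₁))
    -- `deg_G(M₁) = deg_G(M₂)`
    (hdegEq : ∑ v ∈ M₁, G.degree v = ∑ v ∈ M₂, G.degree v) :
    ∃ ψ : Arc G → ℂ, ψ ≠ 0 ∧ walkOp G M ψ = ψ := by
  classical
  obtain ⟨g, hgsymm, hg0, hgrow⟩ := Stmt9Aux.exists_good_flow G hdeg M hM hMconn M₁ M₂
    hM12 hM12disj hbip hdegEq
  refine ⟨fun a => 1 + g a.1.1 a.1.2, ?_, ?_⟩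
  · -- nonzero
    obtain ⟨u, hu⟩ := (Set.ne_univ_iff_exists_notMem M).mp hMproper
    have hne : (G.neighborFinset u).Nonempty := by
      rw [← Finset.card_pos, G.card_neighborFinset_eq_degree]
      exact hdeg u
    obtain ⟨v0, hv0⟩ := hne
    have hadj : G.Adj u v0 := (SimpleGraph.mem_neighborFinset _ _ _).mp hv0
    intro h0
    have := congrFun h0 ⟨(u, v0), hadj⟩
    rw [hg0 u hu v0] at this
    simp at this
  · -- stationarity
    funext a
    obtain ⟨⟨u, v⟩, hadj⟩ := a
    simp only [walkOp, shiftOp, coinOp]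
    have hsum : (∑ w ∈ (G.neighborFinset v).attach, (1 + g v (w : V)))
        = (G.degree v : ℂ) + ∑ w ∈ G.neighborFinset v, g v w := by
      rw [Finset.sum_attach (G.neighborFinset v) (fun w => 1 + g v w),
        Finset.sum_add_distrib, Finset.sum_const, G.card_neighborFinset_eq_degree]
      simp
    have hd : ((G.degree v : ℂ)) ≠ 0 := Nat.cast_ne_zero.mpr (hdeg v).ne'
    show (if v ∈ M then (-1 : ℂ) else 1) *
        ((2 / (G.degree v : ℂ)) * (∑ w ∈ (G.neighborFinset v).attach, (1 + g v (w : V)))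
          - (1 + g v u)) = 1 + g u v
    rw [hsum, hgrow v, hgsymm u v]
    by_cases hv : v ∈ M
    · rw [if_pos hv, if_pos hv]
      ring
    · rw [if_neg hv, if_neg hv, hg0 v hv u]
      field_simp
      ring
end

section
/- Suppose G is connected, M is a nonempty proper subset of V, and the subgraph of G induced on M is connected and not bipartite (it contains a cycle of odd length). Then the coined quantum walk on G with marked set M has a stationary state, i.e., there exists a nonzero ψ : A(G) → ℂ with Uψ = ψ. -/
open Finset

section Aux

variable {V : Type*} [Fintype V] [DecidableEq V] (G : SimpleGraph V) [DecidableRel G.Adj]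
  (M : Set V) [DecidablePred (· ∈ M)]

/-- auxiliary incidence-type map -/
noncomputable def auxT : ((V × V) → ℂ) →ₗ[ℂ] (↥M → ℂ) where
  toFun f := fun v => ∑ w ∈ (G.neighborFinset v.1).filter (· ∈ M), (f (v.1, w) + f (w, v.1))
  map_add' f g := by
    funext v
    simp only [Pi.add_apply, ← Finset.sum_add_distrib]
    exact Finset.sum_congr rfl (fun w _ => by ring)
  map_smul' c f := by
    funext v
    simp only [Pi.smul_apply, smul_eq_mul, RingHom.id_apply, Finset.mul_sum]
    exact Finset.sum_congr rfl (fun w _ => by ring)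

theorem auxT_surj
    (hMconn : (G.induce M).Connected)
    (hnotbip : ¬ ∃ (A B : Set V), A ∪ B = M ∧ Disjoint A B ∧
        ∀ u ∈ M, ∀ v ∈ M, G.Adj u v → (u ∈ A ∧ v ∈ B) ∨ (u ∈ B ∧ v ∈ A)) :
    Function.Surjective (auxT G M) := by
  rw [← LinearMap.range_eq_top]
  by_contra h
  obtain ⟨φ, hφne, hφ⟩ := Submodule.exists_dual_map_eq_bot_of_lt_top
    (lt_top_iff_ne_top.mpr h) inferInstance
  set c : ↥M → ℂ := fun v => φ (Pi.single v 1) with hc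
  have hker : ∀ f, φ (auxT G M f) = 0 := by
    intro f
    have h1 : auxT G M f ∈ LinearMap.range (auxT G M) := ⟨f, rfl⟩
    have h2 := Submodule.mem_map_of_mem (f := φ) h1
    rw [hφ] at h2
    simpa using h2
  -- edge relation
  have hedge : ∀ u v : ↥M, G.Adj u.1 v.1 → c u + c v = 0 := by
    intro u v huv
    have huvne' : u ≠ v := fun h => (G.ne_of_adj huv) (by rw [h])
    set f : (V × V) → ℂ := fun p => if p = (u.1, v.1) then 1 else 0 with hf
    have hTf : auxT G M f = Pi.single u 1 + Pi.single v 1 := by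
      funext x
      show (∑ w ∈ (G.neighborFinset x.1).filter (· ∈ M), (f (x.1, w) + f (w, x.1))) = _
      rw [Finset.sum_add_distrib, Pi.add_apply]
      by_cases hxu : x = u <;> by_cases hxv : x = v
      · exact absurd (hxu.symm.trans hxv) huvne'
      · subst hxu
        have hne1 : (x : V) ≠ v := fun hh => hxv (Subtype.ext hh)
        have h1 : ∀ w, f (x.1, w) = if w = v.1 then 1 else 0 := by
          intro w; simp [hf, Prod.ext_iff]
        have h2 : ∀ w, f (w, x.1) = 0 := by
          intro w; simp [hf, Prod.ext_iff, hne1]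
        have hmem : v.1 ∈ (G.neighborFinset x.1).filter (· ∈ M) := by
          simp only [Finset.mem_filter, SimpleGraph.mem_neighborFinset]
          exact ⟨huv, v.2⟩
        simp only [h1, h2, Finset.sum_const_zero, Finset.sum_ite_eq' _ _ (fun _ => (1:ℂ)),
          if_pos hmem, add_zero, Pi.single_apply, if_pos rfl, if_neg hxv]
        simp
      · subst hxv
        have hne1 : (x : V) ≠ u := fun hh => hxu (Subtype.ext hh)
        have h1 : ∀ w, f (x.1, w) = 0 := by
          intro w; simp [hf, Prod.ext_iff, hne1]
        have h2 : ∀ w, f (w, x.1) = if w = u.1 then 1 else 0 := by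
          intro w; simp [hf, Prod.ext_iff]
        have hmem : u.1 ∈ (G.neighborFinset x.1).filter (· ∈ M) := by
          simp only [Finset.mem_filter, SimpleGraph.mem_neighborFinset]
          exact ⟨huv.symm, u.2⟩
        simp only [h1, h2, Finset.sum_const_zero, Finset.sum_ite_eq' _ _ (fun _ => (1:ℂ)),
          if_pos hmem, zero_add, Pi.single_apply, if_pos rfl, if_neg hxu]
        simp
      · have hne1 : (x : V) ≠ u := fun hh => hxu (Subtype.ext hh)
        have hne2 : (x : V) ≠ v := fun hh => hxv (Subtype.ext hh)
        have h1 : ∀ w, f (x.1, w) = 0 := by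
          intro w; simp [hf, Prod.ext_iff, hne1]
        have h2 : ∀ w, f (w, x.1) = 0 := by
          intro w; simp [hf, Prod.ext_iff, hne2]
        simp [h1, h2, Pi.single_apply, hxu, hxv]
    have hk := hker f
    rw [hTf, map_add] at hk
    exact hk
  -- parity along walks
  have hwalk : ∀ (x y : ↥M), (G.induce M).Walk x y →
      ∀ a : ℂ, (c x = a ∨ c x = -a) → (c y = a ∨ c y = -a) := by
    intro x y w
    induction w with
    | nil => exact fun a h => h
    | @cons x b y h p ih =>
      intro a hx
      apply ih
      have hadj : G.Adj x.1 b.1 := h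
      have he := hedge _ _ hadj
      rcases hx with h1 | h1
      · exact Or.inr (by linear_combination he - h1)
      · exact Or.inl (by linear_combination he - h1)
  -- c vanishes
  have hc0 : ∀ x : ↥M, c x = 0 := by
    intro x
    by_contra hne
    apply hnotbip
    refine ⟨{y | ∃ hy : y ∈ M, c ⟨y, hy⟩ = c x}, {y | ∃ hy : y ∈ M, c ⟨y, hy⟩ = -c x},
      ?_, ?_, ?_⟩
    · ext y
      constructor
      · rintro (⟨hy, _⟩ | ⟨hy, _⟩) <;> exact hy
      · intro hy
        obtain ⟨w⟩ := (hMconn.preconnected x ⟨y, hy⟩)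
        rcases hwalk x ⟨y, hy⟩ w (c x) (Or.inl rfl) with h1 | h1
        · exact Or.inl ⟨hy, h1⟩
        · exact Or.inr ⟨hy, h1⟩
    · rw [Set.disjoint_left]
      rintro y ⟨hy, h1⟩ ⟨hy', h2⟩
      rw [h1] at h2
      exact hne (by linear_combination h2 / 2)
    · intro u hu v hv huv
      have he := hedge ⟨u, hu⟩ ⟨v, hv⟩ huv
      obtain ⟨w⟩ := (hMconn.preconnected x ⟨u, hu⟩)
      rcases hwalk x ⟨u, hu⟩ w (c x) (Or.inl rfl) with h1 | h1
      · exact Or.inl ⟨⟨hu, h1⟩, ⟨hv, by linear_combination he - h1⟩⟩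
      · exact Or.inr ⟨⟨hu, h1⟩, ⟨hv, by linear_combination he - h1⟩⟩
  -- φ = 0
  apply hφne
  apply LinearMap.ext
  intro g
  have hg : g = ∑ v, Pi.single v (g v) := (Finset.univ_sum_single g).symm
  rw [hg, map_sum]
  apply Finset.sum_eq_zero
  intro v _
  have hsingle : (Pi.single v (g v) : ↥M → ℂ) = g v • (Pi.single v 1 : ↥M → ℂ) := by
    funext w
    simp [Pi.single_apply, mul_ite]
  rw [hsingle, map_smul, show φ (Pi.single v 1) = c v from rfl, hc0 v, smul_zero]

end Aux

theorem stmt10 {V : Type*} [Fintype V] [DecidableEq V] (G : SimpleGraph V) [DecidableRel G.Adj]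
    (hdeg : ∀ v : V, 0 < G.degree v)
    (M : Set V) [DecidablePred (· ∈ M)]
    (hG : G.Connected) (hM : M.Nonempty) (hMproper : M ≠ Set.univ)
    (hMconn : (G.induce M).Connected)
    -- the induced subgraph on `M` is not bipartite
    (hnotbip : ¬ ∃ (A B : Set V), A ∪ B = M ∧ Disjoint A B ∧
        ∀ u ∈ M, ∀ v ∈ M, G.Adj u v → (u ∈ A ∧ v ∈ B) ∨ (u ∈ B ∧ v ∈ A)) :
    ∃ ψ : Arc G → ℂ, ψ ≠ 0 ∧ walkOp G M ψ = ψ := by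
  classical
  obtain ⟨f, hf⟩ := auxT_surj G M hMconn hnotbip
    (fun v => -((((G.neighborFinset v.1).filter (fun w => ¬ w ∈ M)).card : ℂ)))
  refine ⟨fun a => if a.1.1 ∈ M ∧ a.1.2 ∈ M then f (a.1.1, a.1.2) + f (a.1.2, a.1.1) else 1,
    ?_, ?_⟩
  · intro h0
    obtain ⟨u, hu⟩ : ∃ u, u ∉ M := by
      by_contra hcon
      push_neg at hcon
      exact hMproper (Set.eq_univ_iff_forall.mpr hcon)
    obtain ⟨w, hw⟩ := (G.degree_pos_iff_exists_adj u).mp (hdeg u)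
    have h1 := congrFun h0 ⟨(u, w), hw⟩
    simp [hu] at h1
  · funext a
    obtain ⟨⟨u, v⟩, hadj⟩ := a
    simp only [walkOp, shiftOp, coinOp]
    rw [Finset.sum_attach (G.neighborFinset v)
      (fun w => if v ∈ M ∧ w ∈ M then f (v, w) + f (w, v) else 1)]
    by_cases hv : v ∈ M
    · have h1 : (∑ w ∈ (G.neighborFinset v).filter (· ∈ M), (f (v, w) + f (w, v)))
          = -((((G.neighborFinset v).filter (fun w => ¬ w ∈ M)).card : ℂ)) :=
        congrFun hf ⟨v, hv⟩
      have hS : (∑ w ∈ G.neighborFinset v,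
          (if v ∈ M ∧ w ∈ M then f (v, w) + f (w, v) else 1)) = 0 := by
        have h2 : ∀ w ∈ G.neighborFinset v,
            (if v ∈ M ∧ w ∈ M then f (v, w) + f (w, v) else 1)
            = (if w ∈ M then f (v, w) + f (w, v) else 1) := by
          intro w _
          by_cases hw : w ∈ M <;> simp [hv, hw]
        rw [Finset.sum_congr rfl h2, Finset.sum_ite, h1, Finset.sum_const,
          nsmul_eq_mul, mul_one]
        ring
      rw [hS, if_pos hv, mul_zero, zero_sub, neg_one_mul, neg_neg]
      by_cases hu : u ∈ M
      · simp only [hv, hu, and_self, if_true]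
        ring
      · simp only [hv, hu, and_false, false_and, if_false]
    · have hS : (∑ w ∈ G.neighborFinset v,
          (if v ∈ M ∧ w ∈ M then f (v, w) + f (w, v) else 1)) = (G.degree v : ℂ) := by
        rw [Finset.sum_congr rfl (fun w _ => if_neg (fun hc => hv hc.1)),
          Finset.sum_const, nsmul_eq_mul, mul_one]
        rfl
      have hd : ((G.degree v : ℂ)) ≠ 0 := Nat.cast_ne_zero.mpr (hdeg v).ne'
      rw [hS, if_neg hv, div_mul_cancel₀ _ hd, one_mul,
        if_neg (fun hc : v ∈ M ∧ u ∈ M => hv hc.1),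
        if_neg (fun hc : u ∈ M ∧ v ∈ M => hv hc.2)]
      norm_num
end
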